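/- arXiv:2505.15149 — 8 statements merged into one kernel-verified Lean document; each statement's English description precedes it below -/
import Mathlib

section
/- If G is a graph and uv is a pendent edge of u (i.e., v is a vertex whose only neighbor is u), then the deficiency of G equals the deficiency of the graph obtained from G by deleting u and v. Here the deficiency def(G) is the number of vertices not saturated by a maximum matching of G. -/
open SimpleGraph

/-- The deficiency of a graph: number of vertices left unsaturated by a maximum matching,
i.e. `|V| - 2·ν(G)`, expressed as `|V|` minus the maximum number of saturated vertices. -/
noncomputable def deficiency {V : Type*} (G : SimpleGraph V) : ℕ :=
  Nat.card V - sSup {n | ∃ M : G.Subgraph, M.IsMatching ∧ M.verts.ncard = n}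

namespace DefAux

lemma bot_isMatching {V : Type*} (G : SimpleGraph V) : (⊥ : G.Subgraph).IsMatching := by
  intro x hx
  simp only [SimpleGraph.Subgraph.verts_bot, Set.mem_empty_iff_false] at hx

/-- Deleting a matched pair from a matching yields a matching. -/
lemma deleteVerts_pair_isMatching {V : Type*} {G : SimpleGraph V} {M : G.Subgraph}
    (hM : M.IsMatching) {a b : V} (hab : M.Adj a b) :
    (M.deleteVerts {a, b}).IsMatching := by
  intro x hx
  rw [Subgraph.deleteVerts_verts] at hx
  obtain ⟨hxv, hxab⟩ := hx
  obtain ⟨w, hw, hwuniq⟩ := hM hxv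
  have hwne : w ∉ ({a, b} : Set V) := by
    rintro (rfl | rfl)
    · have : x = b := (hM (M.edge_vert hab)).unique hw.symm hab
      exact hxab (by simp [this])
    · have : x = a := (hM (M.edge_vert hab.symm)).unique hw.symm hab.symm
      exact hxab (by simp [this])
  refine ⟨w, Subgraph.deleteVerts_adj.mpr ⟨hxv, hxab, M.edge_vert hw.symm, hwne, hw⟩, ?_⟩
  intro y hy
  exact hwuniq y (Subgraph.deleteVerts_adj.mp hy).2.2.2.2

/-- A matching of `G` avoiding `sᶜ` restricts to a matching of `G.induce s` of the same size. -/
lemma restrict_matching {V : Type*} {G : SimpleGraph V} {s : Set V} {N : G.Subgraph}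
    (hN : N.IsMatching) (hsub : N.verts ⊆ s) :
    ∃ M' : (G.induce s).Subgraph, M'.IsMatching ∧ M'.verts.ncard = N.verts.ncard := by
  refine ⟨⟨Subtype.val ⁻¹' N.verts, fun a b => N.Adj a b,
    fun h => N.adj_sub h, fun h => N.edge_vert h, ⟨fun _ _ h => N.adj_symm h⟩⟩, ?_, ?_⟩
  · intro a ha
    obtain ⟨w, hw, hwuniq⟩ := hN ha
    exact ⟨⟨w, hsub (N.edge_vert hw.symm)⟩, hw, fun y hy => Subtype.ext (hwuniq y hy)⟩
  · have himg : (Subtype.val : s → V) '' (Subtype.val ⁻¹' N.verts) = N.verts := by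
      rw [Set.image_preimage_eq_iff.mpr]
      rw [Subtype.range_coe]; exact hsub
    conv_rhs => rw [← himg]
    rw [Set.ncard_image_of_injective _ Subtype.val_injective]

end DefAux

theorem stmt_0 {V : Type*} [Fintype V] (G : SimpleGraph V) (u v : V)
    (hpendent : G.neighborSet v = {u}) :
    deficiency G = deficiency (G.induce ({u, v}ᶜ : Set V)) := by
  classical
  have hvu : G.Adj v u := by
    have : u ∈ G.neighborSet v := by rw [hpendent]; exact rfl
    exact this
  have huv : G.Adj u v := hvu.symm
  have hne : u ≠ v := huv.ne
  set s : Set V := ({u, v}ᶜ : Set V) with hs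
  set S : Set ℕ := {n | ∃ M : G.Subgraph, M.IsMatching ∧ M.verts.ncard = n} with hS
  set S' : Set ℕ :=
    {n | ∃ M : (G.induce s).Subgraph, M.IsMatching ∧ M.verts.ncard = n} with hS'
  have hSne : S.Nonempty := ⟨0, ⊥, DefAux.bot_isMatching G, by simp⟩
  have hS'ne : S'.Nonempty := ⟨0, ⊥, DefAux.bot_isMatching _, by simp⟩
  have hSbdd : BddAbove S := by
    refine ⟨Nat.card V, ?_⟩
    rintro n ⟨M, -, rfl⟩
    exact (Set.ncard_le_ncard (Set.subset_univ _) Set.finite_univ).trans_eq (Set.ncard_univ V)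
  have hS'bdd : BddAbove S' := by
    refine ⟨Nat.card s, ?_⟩
    rintro n ⟨M, -, rfl⟩
    exact (Set.ncard_le_ncard (Set.subset_univ _) Set.finite_univ).trans_eq (Set.ncard_univ s)
  -- (1) lifting: from S' to S
  have hlift : ∀ n ∈ S', n + 2 ∈ S := by
    rintro n ⟨M', hM', rfl⟩
    set f := (SimpleGraph.Embedding.induce (G := G) s) with hf
    have hfinj : Function.Injective f := f.injective
    set Mmap := M'.map f.toHom with hMmap
    have hMmapm : Mmap.IsMatching := Subgraph.IsMatching.map f.toHom hfinj hM'
    have hverts : Mmap.verts = Subtype.val '' M'.verts := by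
      rw [hMmap, Subgraph.map_verts]; rfl
    have hdisj : Disjoint Mmap.support (G.subgraphOfAdj huv).support := by
      rw [SimpleGraph.support_subgraphOfAdj, hMmapm.support_eq_verts, hverts]
      rw [Set.disjoint_left]
      rintro x ⟨⟨y, hy⟩, -, rfl⟩ hx
      exact hy hx
    refine ⟨Mmap ⊔ G.subgraphOfAdj huv,
      hMmapm.sup (Subgraph.IsMatching.subgraphOfAdj huv) hdisj, ?_⟩
    rw [Subgraph.verts_sup, subgraphOfAdj_verts, hverts]
    have hdisj2 : Disjoint (Subtype.val '' M'.verts) ({u, v} : Set V) := by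
      rw [Set.disjoint_left]
      rintro x ⟨⟨y, hy⟩, -, rfl⟩ hx
      exact hy hx
    rw [Set.ncard_union_eq hdisj2 (Set.toFinite _) (Set.toFinite _),
      Set.ncard_image_of_injective _ Subtype.val_injective, Set.ncard_pair hne]
  -- (2) projection: from S to S'
  have hproj : ∀ n ∈ S, ∃ m ∈ S', n ≤ m + 2 := by
    rintro n ⟨M, hM, rfl⟩
    -- find a matching avoiding u and v, losing at most 2 vertices
    have key : ∃ N : G.Subgraph, N.IsMatching ∧ N.verts ⊆ s ∧
        M.verts.ncard ≤ N.verts.ncard + 2 := by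
      have hcase : (∃ a b : V, M.Adj a b ∧ ({u, v} : Set V) ∩ M.verts ⊆ {a, b}) ∨
          (∀ x ∈ M.verts, x ∉ ({u, v} : Set V)) := by
        by_cases hv : v ∈ M.verts
        · obtain ⟨w, hw, -⟩ := hM hv
          have hwu : w = u := by
            have : w ∈ G.neighborSet v := M.adj_sub hw
            rwa [hpendent] at this
          have hwadj : M.Adj v u := hwu ▸ hw
          exact Or.inl ⟨v, u, hwadj, by intro x hx; rcases hx.1 with rfl | rfl <;> simp⟩
        · by_cases hu : u ∈ M.verts
          · obtain ⟨w, hw, -⟩ := hM hu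
            refine Or.inl ⟨u, w, hw, ?_⟩
            rintro x ⟨(rfl | rfl), hx2⟩
            · simp
            · exact absurd hx2 hv
          · refine Or.inr fun x hx hmem => ?_
            rcases hmem with rfl | rfl
            · exact hu hx
            · exact hv hx
      rcases hcase with ⟨a, b, hab, hsub⟩ | havoid
      · refine ⟨M.deleteVerts {a, b}, DefAux.deleteVerts_pair_isMatching hM hab, ?_, ?_⟩
        · rw [Subgraph.deleteVerts_verts]
          intro x hx hmem
          exact hx.2 (hsub ⟨hmem, hx.1⟩)
        · rw [Subgraph.deleteVerts_verts]
          have h1 : M.verts ⊆ (M.verts \ ({a, b} : Set V)) ∪ {a, b} := by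
            intro x hx
            by_cases hxa : x ∈ ({a, b} : Set V)
            · exact Or.inr hxa
            · exact Or.inl ⟨hx, hxa⟩
          have h2 : M.verts.ncard ≤ ((M.verts \ ({a, b} : Set V)) ∪ {a, b}).ncard :=
            Set.ncard_le_ncard h1 (Set.toFinite _)
          have h3 : ((M.verts \ ({a, b} : Set V)) ∪ {a, b}).ncard ≤
              (M.verts \ ({a, b} : Set V)).ncard + ({a, b} : Set V).ncard :=
            Set.ncard_union_le _ _
          have h4 : ({a, b} : Set V).ncard ≤ 2 := by
            refine (Set.ncard_insert_le _ _).trans ?_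
            simp [Set.ncard_singleton]
          omega
      · exact ⟨M, hM, fun x hx => havoid x hx, by omega⟩
    obtain ⟨N, hNm, hNsub, hNcard⟩ := key
    obtain ⟨M', hM'm, hM'card⟩ := DefAux.restrict_matching hNm hNsub
    exact ⟨M'.verts.ncard, ⟨M', hM'm, rfl⟩, by omega⟩
  -- combine
  have hA : sSup S ∈ S := Nat.sSup_mem hSne hSbdd
  have hB : sSup S' ∈ S' := Nat.sSup_mem hS'ne hS'bdd
  have h1 : sSup S' + 2 ≤ sSup S := le_csSup hSbdd (hlift _ hB)
  have h2 : sSup S ≤ sSup S' + 2 := by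
    obtain ⟨m, hm, hle⟩ := hproj _ hA
    exact hle.trans (by have := le_csSup hS'bdd hm; omega)
  have hsup : sSup S = sSup S' + 2 := le_antisymm h2 h1
  have hcards : Nat.card s = Nat.card V - 2 := by
    rw [Nat.card_coe_set_eq]
    have hc : sᶜ = ({u, v} : Set V) := by rw [hs, compl_compl]
    have := Set.ncard_add_ncard_compl s
    rw [hc, Set.ncard_pair hne] at this
    omega
  rw [deficiency, deficiency, ← hS, ← hS', hsup, hcards]
  omega
end

section
/- Let G be a graph with vertex partition V(G) = X ∪ Y such that Y ⊆ N(X). Then there exists a matching M in G such that with Y_M = Y \ V(M) and X_M = {x ∈ X \ V(M) : N(x) ∩ Y_M ≠ ∅}, one has: Y_M ⊆ N(X_M), Y_M is independent, and for every x ∈ X_M there exist two distinct vertices y₁, y₂ ∈ Y_M whose only neighbor in (X ∪ Y) \ V(M) is x. -/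
open SimpleGraph

theorem stmt_2 {V : Type*} [Fintype V] (G : SimpleGraph V) (X Y : Set V)
    (hunion : X ∪ Y = Set.univ) (hdisj : Disjoint X Y)
    (hYN : ∀ y ∈ Y, ∃ x ∈ X, G.Adj x y) :
    ∃ M : G.Subgraph, M.IsMatching ∧
      -- (1) Y_M ⊆ N(X_M)
      (∀ y ∈ Y \ M.verts, ∃ x, (x ∈ X \ M.verts ∧ ∃ y' ∈ Y \ M.verts, G.Adj x y') ∧ G.Adj x y) ∧
      -- (2) Y_M is an independent set
      (∀ y₁ ∈ Y \ M.verts, ∀ y₂ ∈ Y \ M.verts, ¬ G.Adj y₁ y₂) ∧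
      -- (3) every x ∈ X_M has two private neighbors y₁ ≠ y₂ in Y_M whose only
      -- neighbor outside V(M) is x
      (∀ x, x ∈ X \ M.verts → (∃ y' ∈ Y \ M.verts, G.Adj x y') →
        ∃ y₁ y₂, y₁ ∈ Y \ M.verts ∧ y₂ ∈ Y \ M.verts ∧ y₁ ≠ y₂ ∧
          (∀ z, z ∉ M.verts → (G.Adj y₁ z ↔ z = x)) ∧
          (∀ z, z ∉ M.verts → (G.Adj y₂ z ↔ z = x))) := by
  classical
  -- the invariant: M is a matching and every unmatched y ∈ Y has an unmatched
  -- neighbor in X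
  set P : G.Subgraph → Prop := fun M => M.IsMatching ∧
    ∀ y ∈ Y \ M.verts, ∃ x ∈ X \ M.verts, G.Adj x y with hP
  -- extending a matching by one edge on unmatched vertices
  have hext : ∀ (M : G.Subgraph), M.IsMatching → ∀ (a b : V) (hadj : G.Adj a b),
      a ∉ M.verts → b ∉ M.verts →
      (M ⊔ G.subgraphOfAdj hadj).IsMatching ∧
      (M ⊔ G.subgraphOfAdj hadj).verts = M.verts ∪ {a, b} := by
    intro M hM a b hadj ha hb
    constructor
    · apply hM.sup (Subgraph.IsMatching.subgraphOfAdj hadj)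
      rw [hM.support_eq_verts, support_subgraphOfAdj]
      rw [Set.disjoint_left]
      intro c hc hc2
      rcases hc2 with rfl | rfl
      · exact ha hc
      · exact hb hc
    · simp [Subgraph.verts_sup]
  -- the set of achievable cardinalities
  set s : Set ℕ := {n | ∃ M : G.Subgraph, P M ∧ M.verts.ncard = n} with hs
  have hbot : P ⊥ := by
    constructor
    · intro v hv; simp at hv
    · intro y hy
      obtain ⟨x, hx, hadj⟩ := hYN y hy.1
      exact ⟨x, ⟨hx, by simp⟩, hadj⟩
  have hsne : s.Nonempty := ⟨(⊥ : G.Subgraph).verts.ncard, ⊥, hbot, rfl⟩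
  have hsbdd : BddAbove s := by
    refine ⟨Fintype.card V, ?_⟩
    rintro n ⟨M, _, rfl⟩
    calc M.verts.ncard ≤ (Set.univ : Set V).ncard :=
          Set.ncard_le_ncard (Set.subset_univ _) Set.finite_univ
      _ = Fintype.card V := by rw [Set.ncard_univ, Nat.card_eq_fintype_card]
  obtain ⟨M, ⟨hMmatch, hcov⟩, hcard⟩ := Nat.sSup_mem hsne hsbdd
  have hmax : ∀ M' : G.Subgraph, P M' → M'.verts.ncard ≤ M.verts.ncard := by
    intro M' h'
    rw [hcard]
    exact le_csSup hsbdd ⟨M', h', rfl⟩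
  -- growing M by an edge while keeping the invariant is impossible
  have hgrow : ∀ (a b : V) (hadj : G.Adj a b), a ∉ M.verts → b ∉ M.verts →
      (∀ y ∈ Y \ (M.verts ∪ ({a, b} : Set V)),
        ∃ x ∈ X \ (M.verts ∪ ({a, b} : Set V)), G.Adj x y) → False := by
    intro a b hadj ha hb hcov'
    obtain ⟨hm', hv'⟩ := hext M hMmatch a b hadj ha hb
    have hle : (M ⊔ G.subgraphOfAdj hadj).verts.ncard ≤ M.verts.ncard := by
      apply hmax
      exact ⟨hm', by rw [hv']; exact hcov'⟩
    have hlt : M.verts.ncard < (M ⊔ G.subgraphOfAdj hadj).verts.ncard := by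
      rw [hv']
      refine Set.ncard_lt_ncard ?_ (Set.toFinite _)
      refine ⟨Set.subset_union_left, fun hsub => ha (hsub ?_)⟩
      simp
    omega
  -- independence of unmatched Y
  have hindep : ∀ y₁ ∈ Y \ M.verts, ∀ y₂ ∈ Y \ M.verts, ¬ G.Adj y₁ y₂ := by
    intro y₁ hy₁ y₂ hy₂ hadj
    apply hgrow y₁ y₂ hadj hy₁.2 hy₂.2
    intro y hy
    obtain ⟨x, ⟨hxX, hxM⟩, hxadj⟩ := hcov y ⟨hy.1, fun h => hy.2 (Set.mem_union_left _ h)⟩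
    refine ⟨x, ⟨hxX, ?_⟩, hxadj⟩
    intro hxmem
    rcases hxmem with h | h
    · exact hxM h
    · rcases h with rfl | rfl
      · exact Set.disjoint_left.mp hdisj hxX hy₁.1
      · exact Set.disjoint_left.mp hdisj hxX hy₂.1
  refine ⟨M, hMmatch, ?_, hindep, ?_⟩
  · -- (1)
    intro y hy
    obtain ⟨x, ⟨hxX, hxM⟩, hxadj⟩ := hcov y hy
    exact ⟨x, ⟨⟨hxX, hxM⟩, ⟨y, hy, hxadj⟩⟩, hxadj⟩
  · -- (3)
    intro x hx hyx
    obtain ⟨hxX, hxM⟩ := hx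
    obtain ⟨y', hy', hxy'⟩ := hyx
    by_contra hcon
    set priv : V → Prop := fun y => y ∈ Y \ M.verts ∧ G.Adj x y ∧
      ∀ z, z ∉ M.verts → G.Adj y z → z = x with hpriv
    have huniq : ∀ y₁ y₂, priv y₁ → priv y₂ → y₁ = y₂ := by
      intro y₁ y₂ h₁ h₂
      by_contra hne
      refine hcon ⟨y₁, y₂, h₁.1, h₂.1, hne, ?_, ?_⟩
      · intro z hz
        exact ⟨fun ha => h₁.2.2 z hz ha, fun he => by subst he; exact h₁.2.1.symm⟩
      · intro z hz
        exact ⟨fun ha => h₂.2.2 z hz ha, fun he => by subst he; exact h₂.2.1.symm⟩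
    -- choose the vertex to match x with: a private neighbor if one exists,
    -- otherwise any unmatched neighbor
    obtain ⟨ys, hysY, hysadj, hysall⟩ :
        ∃ ys, ys ∈ Y \ M.verts ∧ G.Adj x ys ∧ ∀ y, priv y → y = ys := by
      by_cases h : ∃ y, priv y
      · obtain ⟨y0, hy0⟩ := h
        exact ⟨y0, hy0.1, hy0.2.1, fun y hy => huniq y y0 hy hy0⟩
      · exact ⟨y', hy', hxy', fun y hy => absurd ⟨y, hy⟩ h⟩
    apply hgrow x ys hysadj hxM hysY.2
    intro y hy
    have hyM : y ∈ Y \ M.verts := ⟨hy.1, fun h => hy.2 (Set.mem_union_left _ h)⟩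
    have hyne : y ≠ ys := fun h => hy.2 (Set.mem_union_right _ (by simp [h]))
    obtain ⟨x', ⟨hx'X, hx'M⟩, hx'adj⟩ := hcov y hyM
    by_cases hxx : x' = x
    · -- y is adjacent to x but is not private, so it has another unmatched
      -- neighbor z ≠ x, which must lie in X by independence
      subst hxx
      obtain ⟨z, hzM, hzadj, hzx⟩ : ∃ z, z ∉ M.verts ∧ G.Adj y z ∧ z ≠ x' := by
        by_contra hno
        push_neg at hno
        exact hyne (hysall y ⟨hyM, hx'adj, fun z hz ha => hno z hz ha⟩)
      have hzX : z ∈ X := by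
        rcases (hunion ▸ Set.mem_univ z : z ∈ X ∪ Y) with h | h
        · exact h
        · exact absurd hzadj (hindep y hyM z ⟨h, hzM⟩)
      refine ⟨z, ⟨hzX, ?_⟩, hzadj.symm⟩
      intro hzmem
      rcases hzmem with h | h
      · exact hzM h
      · rcases h with rfl | rfl
        · exact hzx rfl
        · exact Set.disjoint_left.mp hdisj hzX hysY.1
    · refine ⟨x', ⟨hx'X, ?_⟩, hx'adj⟩
      intro hmem
      rcases hmem with h | h
      · exact hx'M h
      · rcases h with rfl | rfl
        · exact hxx rfl
        · exact Set.disjoint_left.mp hdisj hx'X hysY.1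
end

section
/- Every nontrivial deficiency-critical connected graph G contains a snail horn: a vertex x with two distinct neighbors y, z such that N(y) = N(z) = {x}. -/
open SimpleGraph

section SnailAuxSection

open Set


namespace SnailAux

variable {V : Type*} {G : SimpleGraph V} {s t : Set V} {a b c : V}

/-- There is a walk from `a` to `b` all of whose vertices lie in `s`. -/
def GW (G : SimpleGraph V) (s : Set V) (a b : V) : Prop :=
  ∃ p : G.Walk a b, ∀ x ∈ p.support, x ∈ s

lemma GW.mem_left (h : GW G s a b) : a ∈ s := by
  obtain ⟨p, hp⟩ := h; exact hp a p.start_mem_support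

lemma GW.mem_right (h : GW G s a b) : b ∈ s := by
  obtain ⟨p, hp⟩ := h; exact hp b p.end_mem_support

lemma GW.refl (ha : a ∈ s) : GW G s a a :=
  ⟨Walk.nil, by simpa using ha⟩

lemma GW.symm (h : GW G s a b) : GW G s b a := by
  obtain ⟨p, hp⟩ := h
  exact ⟨p.reverse, by intro x hx; rw [Walk.support_reverse, List.mem_reverse] at hx; exact hp x hx⟩

lemma GW.trans (h : GW G s a b) (h' : GW G s b c) : GW G s a c := by
  obtain ⟨p, hp⟩ := h; obtain ⟨q, hq⟩ := h'
  refine ⟨p.append q, ?_⟩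
  intro x hx
  rw [Walk.mem_support_append_iff] at hx
  rcases hx with hx | hx
  · exact hp x hx
  · exact hq x hx

lemma GW.step (h : GW G s a b) (hbc : G.Adj b c) (hc : c ∈ s) : GW G s a c :=
  h.trans ⟨Walk.cons hbc Walk.nil, by
    intro x hx
    simp only [Walk.support_cons, Walk.support_nil, List.mem_cons, List.not_mem_nil,
      or_false] at hx
    rcases hx with h1 | h1 <;> subst h1
    exacts [h.mem_right, hc]⟩

lemma GW.mono (hst : s ⊆ t) (h : GW G s a b) : GW G t a b := by
  obtain ⟨p, hp⟩ := h; exact ⟨p, fun x hx => hst (hp x hx)⟩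

/-- The connected component of `a` within the vertex set `s`. -/
def CC (G : SimpleGraph V) (s : Set V) (a : V) : Set V := {b | GW G s a b}

lemma CC_subset : CC G s a ⊆ s := fun _ h => GW.mem_right h

lemma mem_CC_self (ha : a ∈ s) : a ∈ CC G s a := GW.refl ha

lemma CC_closed (hb : b ∈ CC G s a) (hadj : G.Adj b c) (hc : c ∈ s) : c ∈ CC G s a :=
  GW.step hb hadj hc

lemma GW_of_mem_CC (hb : b ∈ CC G s a) : GW G (CC G s a) a b := by
  classical
  obtain ⟨p, hp⟩ := hb
  refine ⟨p, ?_⟩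
  intro x hx
  exact ⟨p.takeUntil x hx, fun y hy => hp y (Walk.support_takeUntil_subset _ _ hy)⟩

/-- `s` is nonempty and any two of its vertices are joined by a walk inside `s`. -/
def Scon (G : SimpleGraph V) (s : Set V) : Prop :=
  s.Nonempty ∧ ∀ a ∈ s, ∀ b ∈ s, GW G s a b

lemma scon_of_base (ha : a ∈ s) (h : ∀ b ∈ s, GW G s a b) : Scon G s :=
  ⟨⟨a, ha⟩, fun x hx y hy => (h x hx).symm.trans (h y hy)⟩

lemma exists_not_GW (h : ¬ Scon G s) (hne : s.Nonempty) :
    ∃ a ∈ s, ∃ b ∈ s, ¬ GW G s a b := by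
  rw [Scon] at h
  push_neg at h
  exact h hne

lemma Scon.CC (ha : a ∈ s) : Scon G (CC G s a) :=
  scon_of_base (mem_CC_self ha) (fun _ hb => GW_of_mem_CC hb)

private lemma reachable_induce_aux {s : Set V} :
    ∀ {a b : V} (p : G.Walk a b), (∀ x ∈ p.support, x ∈ s) →
      ∀ (ha : a ∈ s) (hb : b ∈ s), (G.induce s).Reachable ⟨a, ha⟩ ⟨b, hb⟩ := by
  intro a b p
  induction p with
  | nil => intro _ ha hb; rfl
  | cons hadj q ih =>
    intro hsupp ha hb
    have hm : ∀ x ∈ q.support, x ∈ s := fun x hx => hsupp x (by simp [hx])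
    have hu : _ ∈ s := hm _ q.start_mem_support
    refine Reachable.trans (Adj.reachable ?_) (ih hm hu hb)
    simp only [comap_adj, Function.Embedding.coe_subtype]
    exact hadj

lemma Scon.connected (h : Scon G s) : (G.induce s).Connected := by
  obtain ⟨⟨a, ha⟩, h2⟩ := h
  haveI : Nonempty ↑s := ⟨⟨a, ha⟩⟩
  refine ⟨fun x y => ?_⟩
  obtain ⟨p, hp⟩ := h2 x x.2 y y.2
  have := reachable_induce_aux p hp x.2 y.2
  simpa using this

end SnailAux

namespace SnailAux

variable {V : Type*} {G : SimpleGraph V} {s t X : Set V} {a b c w : V}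

/-- `X` is a nonempty connected set all of whose outgoing edges go to `c`. -/
def IsHang (G : SimpleGraph V) (c : V) (X : Set V) : Prop :=
  X.Nonempty ∧ c ∉ X ∧ (∀ a ∈ X, ∀ b, G.Adj a b → b ∈ X ∪ {c}) ∧ Scon G X

lemma exists_adj_of_connected (hconn : G.Connected) (h2 : ∃ w : V, w ≠ a) :
    ∃ b, G.Adj a b := by
  obtain ⟨w, hw⟩ := h2
  obtain ⟨p⟩ := hconn.preconnected a w
  cases p with
  | nil => exact absurd rfl hw.symm
  | cons h q => exact ⟨_, h⟩

private lemma outside_aux (hcX : c ∉ X)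
    (hcl : ∀ a ∈ X, ∀ b, G.Adj a b → b ∈ X ∪ {c}) :
    ∀ (u v : V) (_ : G.Walk u v), v = c → u ∉ X → GW G Xᶜ u c := by
  intro u v p
  induction p with
  | nil =>
    intro heq hu
    rw [heq] at hu ⊢
    exact GW.refl (show c ∈ Xᶜ from hcX)
  | @cons u t v hadj q ih =>
    intro heq hu
    by_cases huc : u = c
    · rw [huc]; exact GW.refl (show c ∈ Xᶜ from hcX)
    · have ht : t ∉ X := by
        intro htX
        rcases hcl t htX u hadj.symm with h | h
        · exact hu h
        · exact huc (by simpa using h)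
      refine GW.trans ⟨Walk.cons hadj Walk.nil, ?_⟩ (ih heq ht)
      intro x hx
      simp only [Walk.support_cons, Walk.support_nil, List.mem_cons, List.not_mem_nil,
        or_false] at hx
      rcases hx with h1 | h1 <;> subst h1
      exacts [hu, ht]

/-- Everything outside a hang reaches `c` while avoiding the hang. -/
lemma IsHang.outside (hH : IsHang G c X) (hconn : G.Connected) (hw : w ∉ X) :
    GW G Xᶜ w c := by
  obtain ⟨p⟩ := hconn.preconnected w c
  exact outside_aux hH.2.1 hH.2.2.1 w c p rfl hw

/-- The component of `w` in the complement of a single vertex is always a hang. -/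
lemma isHang_cc1 (hwb : w ≠ b) : IsHang G b (CC G ({b}ᶜ : Set V) w) := by
  have hwmem : w ∈ ({b}ᶜ : Set V) := by simpa using hwb
  refine ⟨⟨w, mem_CC_self hwmem⟩, ?_, ?_, Scon.CC hwmem⟩
  · intro hb
    exact (CC_subset hb) rfl
  · intro x hx y hxy
    by_cases hyb : y = b
    · right; simpa using hyb
    · left; exact CC_closed hx hxy (by simpa using hyb)

private lemma CC_subset_closed_aux {T : Set V} {b : V}
    (hcl : ∀ x ∈ T, ∀ u, G.Adj x u → u ∈ T ∪ {b}) :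
    ∀ (u v : V) (p : G.Walk u v), (∀ x ∈ p.support, x ∈ ({b}ᶜ : Set V)) →
      u ∈ T → v ∈ T := by
  intro u v p
  induction p with
  | nil => exact fun _ h => h
  | @cons u t v hadj q ih =>
    intro hsupp hu
    have ht : t ∈ T := by
      rcases hcl u hu t hadj with h | h
      · exact h
      · exact absurd (by simpa using h)
          (show t ≠ b by simpa using hsupp t (by simp))
    exact ih (fun x hx => hsupp x (by simp [hx])) ht

lemma CC_subset_closed {T : Set V} (hyT : a ∈ T)
    (hcl : ∀ x ∈ T, ∀ u, G.Adj x u → u ∈ T ∪ {b}) :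
    CC G ({b}ᶜ : Set V) a ⊆ T := by
  intro q hq
  obtain ⟨p, hp⟩ := hq
  exact CC_subset_closed_aux hcl a q p hp hyT

private lemma clique_aux
    (hcon : ∀ m z₁ z₂ : V, m ∈ X → z₁ ∈ X → z₂ ∈ X → z₁ ≠ z₂ →
      G.Adj m z₁ → ¬ G.Adj m z₂) :
    ∀ (u v : V) (p : G.Walk u v), (∀ x ∈ p.support, x ∈ X) →
      u = v ∨ G.Adj u v := by
  intro u v p
  induction p with
  | nil => exact fun _ => Or.inl rfl
  | @cons u t v hadj q ih =>
    intro hsupp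
    have ht : t ∈ X := hsupp t (by simp)
    have hu : u ∈ X := hsupp u (by simp)
    have hv : v ∈ X := hsupp v (by simp [Walk.end_mem_support])
    rcases ih (fun x hx => hsupp x (by simp [hx])) with h | h
    · exact Or.inr (h ▸ hadj)
    · by_cases huv : u = v
      · exact Or.inl huv
      · exact absurd h (hcon t u v ht hu hv huv hadj.symm)

lemma three_distinct [Finite V] (h3 : 3 ≤ X.ncard) :
    ∃ x y z, x ∈ X ∧ y ∈ X ∧ z ∈ X ∧ x ≠ y ∧ x ≠ z ∧ y ≠ z := by
  obtain ⟨x, hx⟩ := Set.nonempty_of_ncard_ne_zero (s := X) (by omega)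
  have h1 : (X \ {x}).ncard = X.ncard - 1 := Set.ncard_diff_singleton_of_mem hx
  obtain ⟨y, hy⟩ := Set.nonempty_of_ncard_ne_zero (s := X \ {x}) (by omega)
  have h2 : ((X \ {x}) \ {y}).ncard = (X \ {x}).ncard - 1 :=
    Set.ncard_diff_singleton_of_mem hy
  obtain ⟨z, hz⟩ := Set.nonempty_of_ncard_ne_zero (s := (X \ {x}) \ {y}) (by omega)
  refine ⟨x, y, z, hx, hy.1, hz.1.1, ?_, ?_, ?_⟩
  · rintro rfl; exact hy.2 rfl
  · rintro rfl; exact hz.1.2 rfl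
  · rintro rfl; exact hz.2 rfl

/-- a connected set with at least 3 vertices has a vertex with two neighbours inside. -/
lemma exists_center [Finite V] (hX : Scon G X) (h3 : 3 ≤ X.ncard) :
    ∃ m z₁ z₂, m ∈ X ∧ z₁ ∈ X ∧ z₂ ∈ X ∧ z₁ ≠ z₂ ∧ G.Adj m z₁ ∧ G.Adj m z₂ := by
  by_contra hcon
  push_neg at hcon
  have key : ∀ x ∈ X, ∀ y ∈ X, x = y ∨ G.Adj x y := by
    intro x hx y hy
    obtain ⟨p, hp⟩ := hX.2 x hx y hy
    exact clique_aux (fun m z₁ z₂ hm h1 h2 hne ha => hcon m z₁ z₂ hm h1 h2 hne ha) x y p hp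
  obtain ⟨x, y, z, hx, hy, hz, hxy, hxz, hyz⟩ := three_distinct h3
  have a1 : G.Adj x y := (key x hx y hy).resolve_left hxy
  have a2 : G.Adj x z := (key x hx z hz).resolve_left hxz
  exact hcon x y z hx hy hz hyz a1 a2

end SnailAux

namespace SnailAux

variable {V : Type*} {G : SimpleGraph V} {s : Set V} {a b c : V}

lemma getVert_mem_support {u v : V} (p : G.Walk u v) (i : ℕ) :
    p.getVert i ∈ p.support := by
  induction p generalizing i with
  | nil => simp [Walk.getVert]
  | cons h q ih =>
    cases i with
    | zero => simp [Walk.getVert]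
    | succ j =>
      rw [Walk.getVert_cons_succ]
      simp [ih j]

lemma getVertInj {u v : V} {p : G.Walk u v} (hp : p.IsPath) :
    ∀ {i j : ℕ}, i ≤ p.length → j ≤ p.length → p.getVert i = p.getVert j → i = j := by
  induction p with
  | nil => intro i j hi hj _; simp at hi hj; omega
  | @cons u t v h q ih =>
    intro i j hi hj hij
    rw [Walk.cons_isPath_iff] at hp
    cases i with
    | zero =>
      cases j with
      | zero => rfl
      | succ j' =>
        exfalso
        rw [Walk.getVert_zero, Walk.getVert_cons_succ] at hij
        exact hp.2 (hij ▸ getVert_mem_support q j')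
    | succ i' =>
      cases j with
      | zero =>
        exfalso
        rw [Walk.getVert_zero, Walk.getVert_cons_succ] at hij
        exact hp.2 (hij ▸ getVert_mem_support q i')
      | succ j' =>
        rw [Walk.getVert_cons_succ, Walk.getVert_cons_succ] at hij
        rw [Walk.length_cons] at hi hj
        have := ih hp.1 (by omega) (by omega) hij
        omega

variable [Fintype V]

/-- Existence of a "good" maximal path avoiding `c` in its first two vertices. -/
lemma good_path (s : Set V) (c : V)
    (hP3 : ∃ m z₁ z₂, m ∈ s ∧ z₁ ∈ s ∧ z₂ ∈ s ∧ z₁ ≠ z₂ ∧ m ≠ c ∧ z₁ ≠ c ∧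
      G.Adj m z₁ ∧ G.Adj m z₂) :
    ∃ (y v₁ v₂ e : V) (h₁ : G.Adj y v₁) (h₂ : G.Adj v₁ v₂) (p₂ : G.Walk v₂ e),
      (Walk.cons h₁ (Walk.cons h₂ p₂)).IsPath ∧
      (∀ x ∈ (Walk.cons h₁ (Walk.cons h₂ p₂)).support, x ∈ s) ∧
      (∀ z ∈ s, G.Adj y z → z ∈ (Walk.cons h₁ (Walk.cons h₂ p₂)).support) ∧
      y ≠ c ∧ v₁ ≠ c := by
  classical
  obtain ⟨m, z₁, z₂, hms, hz1s, hz2s, hz12, hmc, hz1c, ha1, ha2⟩ := hP3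
  set PL : Set ℕ := {n | ∃ (a e : V) (p : G.Walk a e), p.IsPath ∧
    (∀ x ∈ p.support, x ∈ s) ∧ p.length = n} with hPL
  -- the triangle-free P3 witness
  have hq3 : (Walk.cons ha1.symm (Walk.cons ha2 Walk.nil)).IsPath := by
    rw [Walk.cons_isPath_iff]
    constructor
    · rw [Walk.cons_isPath_iff]
      exact ⟨Walk.IsPath.nil, by simp [ha2.ne]⟩
    · simp only [Walk.support_cons, Walk.support_nil, List.mem_cons, List.not_mem_nil, or_false]
      push_neg
      exact ⟨ha1.ne', hz12⟩
  have hq3s : ∀ x ∈ (Walk.cons ha1.symm (Walk.cons ha2 Walk.nil)).support, x ∈ s := by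
    intro x hx
    simp only [Walk.support_cons, Walk.support_nil, List.mem_cons, List.not_mem_nil,
      or_false] at hx
    rcases hx with rfl | rfl | rfl
    exacts [hz1s, hms, hz2s]
  have mem2 : 2 ∈ PL := ⟨z₁, z₂, _, hq3, hq3s, rfl⟩
  have hbdd : BddAbove PL := by
    refine ⟨Fintype.card V, ?_⟩
    rintro n ⟨a, e, p, hp, _, rfl⟩
    exact hp.length_lt.le
  set L := sSup PL with hLdef
  have hL2 : 2 ≤ L := le_csSup hbdd mem2
  have hLmem : L ∈ PL := Nat.sSup_mem ⟨2, mem2⟩ hbdd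
  have fmax : ∀ (a e : V) (p : G.Walk a e), p.IsPath → (∀ x ∈ p.support, x ∈ s) →
      p.length = L → ∀ z ∈ s, G.Adj a z → z ∈ p.support := by
    intro a e p hp hps hpl z hzs hadj
    by_contra hz
    have : (Walk.cons hadj.symm p).IsPath := (Walk.cons_isPath_iff _ _).2 ⟨hp, hz⟩
    have hmem : L + 1 ∈ PL := by
      refine ⟨z, e, _, this, ?_, by simp [hpl]⟩
      intro x hx
      simp only [Walk.support_cons, List.mem_cons] at hx
      rcases hx with rfl | hx
      exacts [hzs, hps x hx]
    have := le_csSup hbdd hmem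
    omega
  have finish : ∀ (a e : V) (p : G.Walk a e), p.IsPath → (∀ x ∈ p.support, x ∈ s) →
      p.length = L → a ≠ c → p.getVert 1 ≠ c →
      ∃ (y v₁ v₂ e : V) (h₁ : G.Adj y v₁) (h₂ : G.Adj v₁ v₂) (p₂ : G.Walk v₂ e),
        (Walk.cons h₁ (Walk.cons h₂ p₂)).IsPath ∧
        (∀ x ∈ (Walk.cons h₁ (Walk.cons h₂ p₂)).support, x ∈ s) ∧
        (∀ z ∈ s, G.Adj y z → z ∈ (Walk.cons h₁ (Walk.cons h₂ p₂)).support) ∧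
        y ≠ c ∧ v₁ ≠ c := by
    intro a e p hp hps hpl hac h1c
    cases p with
    | nil => simp at hpl; omega
    | @cons _ t _ h₁ q =>
      cases q with
      | nil => simp at hpl; omega
      | @cons _ t₂ _ h₂ r =>
        refine ⟨a, t, t₂, e, h₁, h₂, r, hp, hps, ?_, hac, ?_⟩
        · exact fun z hz hadj => fmax a e _ hp hps hpl z hz hadj
        · simpa [Walk.getVert_cons _ _ one_ne_zero] using h1c
  -- obtain a maximum-length path
  obtain ⟨a, e, p, hp, hps, hpl⟩ := hLmem
  have hae : a ≠ e := by
    intro h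
    have h0 : p.getVert 0 = p.getVert p.length := by
      simp [Walk.getVert_zero, Walk.getVert_length, h]
    have := getVertInj hp (Nat.zero_le _) le_rfl h0
    omega
  have hrev : p.reverse.IsPath := hp.reverse
  have hrevs : ∀ x ∈ p.reverse.support, x ∈ s := by
    intro x hx
    rw [Walk.support_reverse, List.mem_reverse] at hx
    exact hps x hx
  have hrevl : p.reverse.length = L := by simp [hpl]
  by_cases hac : a = c
  · -- use the reverse
    refine finish e a p.reverse hrev hrevs hrevl (fun h => hae (hac.trans h.symm ▸ rfl)) ?_
    simp only [Walk.getVert_reverse, hpl]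
    intro hcon
    have h0 : p.getVert (L - 1) = p.getVert 0 := by rw [hcon, Walk.getVert_zero, hac]
    have := getVertInj hp (by omega) (Nat.zero_le _) h0
    omega
  · by_cases h1c : p.getVert 1 = c
    · by_cases hL3 : 3 ≤ L
      · -- use the reverse
        have he_c : e ≠ c := by
          intro h
          have : p.getVert p.length = p.getVert 1 := by
            rw [Walk.getVert_length, h1c]
            exact h
          have := getVertInj hp le_rfl (by omega) this
          omega
        refine finish e a p.reverse hrev hrevs hrevl he_c ?_
        simp only [Walk.getVert_reverse, hpl]
        intro hcon
        have : p.getVert (L - 1) = p.getVert 1 := by rw [hcon, h1c]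
        have := getVertInj hp (by omega) (by omega) this
        omega
      · -- L = 2 : use the explicit P3
        have hL : L = 2 := by omega
        refine finish z₁ z₂ _ hq3 hq3s (by simp [hL]) hz1c ?_
        rw [Walk.getVert_cons _ _ one_ne_zero, Nat.sub_self, Walk.getVert_zero]
        exact hmc
    · exact finish a e p hp hps hpl hac h1c

end SnailAux

namespace SnailAux

variable {V : Type*} [Fintype V] {G : SimpleGraph V}

lemma hang_step (hconn : G.Connected)
    (HA : ∀ u v : V, G.Adj u v → ¬ Scon G ({u, v}ᶜ : Set V))
    {c : V} {X : Set V} (hH : IsHang G c X) (h2 : 2 ≤ X.ncard) :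
    ∃ (c' : V) (X' : Set V), c' ∈ X ∧ IsHang G c' X' ∧ X' ⊂ X := by
  classical
  obtain ⟨hne, hcX, hcl, hScon⟩ := hH
  by_cases h3 : 3 ≤ X.ncard
  swap
  · -- |X| = 2 : contradiction with HA
    exfalso
    have h2' : X.ncard = 2 := by omega
    obtain ⟨a, b, hab, rfl⟩ := Set.ncard_eq_two.1 h2'
    have hadj : G.Adj a b := by
      obtain ⟨p, hp⟩ := hScon.2 a (by simp) b (by simp)
      cases p with
      | nil => exact absurd rfl hab
      | @cons _ t _ h q =>
        have ht : t ∈ ({a, b} : Set V) := hp t (by simp)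
        rcases ht with rfl | rfl
        · exact absurd rfl h.ne
        · exact h
    refine HA a b hadj (scon_of_base (a := c) (by simpa using hcX) ?_)
    intro z hz
    have hzX : z ∉ ({a, b} : Set V) := by simpa using hz
    exact GW.symm
      (IsHang.outside ⟨hne, hcX, hcl, hScon⟩ hconn hzX)
  · obtain ⟨m, z₁, z₂, hm, hz1, hz2, hz12, ha1, ha2⟩ := exists_center hScon h3
    have hP3 : ∃ m' z₁' z₂', m' ∈ X ∪ {c} ∧ z₁' ∈ X ∪ {c} ∧ z₂' ∈ X ∪ {c} ∧ z₁' ≠ z₂' ∧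
        m' ≠ c ∧ z₁' ≠ c ∧ G.Adj m' z₁' ∧ G.Adj m' z₂' :=
      ⟨m, z₁, z₂, Or.inl hm, Or.inl hz1, Or.inl hz2, hz12,
        fun h => hcX (h ▸ hm), fun h => hcX (h ▸ hz1), ha1, ha2⟩
    obtain ⟨y, v₁, v₂, e, h₁, h₂, p₂, hPpath, hPsupp, hPmax, hyc, hv1c⟩ :=
      good_path (X ∪ {c}) c hP3
    have hyX : y ∈ X := by
      rcases hPsupp y (by simp) with h | h
      · exact h
      · exact absurd (by simpa using h) hyc
    have hv1X : v₁ ∈ X := by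
      rcases hPsupp v₁ (by simp) with h | h
      · exact h
      · exact absurd (by simpa using h) hv1c
    have hNy : ∀ z, G.Adj y z → z ∈ (Walk.cons h₁ (Walk.cons h₂ p₂)).support :=
      fun z hz => hPmax z (hcl y hyX z hz) hz
    set amb := ({y, v₁}ᶜ : Set V) with hamb
    have hcamb : c ∈ amb := by
      simp only [hamb, Set.mem_compl_iff, Set.mem_insert_iff, Set.mem_singleton_iff]
      push_neg
      exact ⟨fun h => hyc h.symm, fun h => hv1c h.symm⟩
    have hnots : ¬ Scon G amb := HA y v₁ h₁
    have hex : ∃ w ∈ amb, ¬ GW G amb c w := by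
      by_contra hcon
      push_neg at hcon
      exact hnots (scon_of_base hcamb hcon)
    obtain ⟨w, hwamb, hwnr⟩ := hex
    set Z₀ := CC G amb w with hZ₀def
    have hwZ₀ : w ∈ Z₀ := mem_CC_self hwamb
    have hcZ₀ : c ∉ Z₀ := fun h => hwnr (GW.symm h)
    have hXamb : Xᶜ ⊆ amb := by
      intro q hq
      simp only [hamb, Set.mem_compl_iff, Set.mem_insert_iff, Set.mem_singleton_iff]
      push_neg
      exact ⟨fun h => hq (h ▸ hyX), fun h => hq (h ▸ hv1X)⟩
    have hZ₀X : Z₀ ⊆ X := by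
      intro z hz
      by_contra hzX
      have h1 : GW G Xᶜ z c := IsHang.outside ⟨hne, hcX, hcl, hScon⟩ hconn hzX
      exact hwnr (GW.symm (GW.trans hz (h1.mono hXamb)))
    have hy_not : y ∉ (Walk.cons h₂ p₂).support := ((Walk.cons_isPath_iff _ _).1 hPpath).2
    have hv1_not : v₁ ∉ p₂.support :=
      ((Walk.cons_isPath_iff _ _).1 ((Walk.cons_isPath_iff _ _).1 hPpath).1).2
    have hp2amb : ∀ x ∈ p₂.support, x ∈ amb := by
      intro x hx
      simp only [hamb, Set.mem_compl_iff, Set.mem_insert_iff, Set.mem_singleton_iff]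
      push_neg
      constructor
      · rintro rfl; exact hy_not (by simp [hx])
      · rintro rfl; exact hv1_not hx
    have hp2cc : ∀ x ∈ p₂.support, GW G amb v₂ x := by
      intro x hx
      exact ⟨p₂.takeUntil x hx, fun z hz =>
        hp2amb z (Walk.support_takeUntil_subset _ _ hz)⟩
    have hyne1 : y ≠ v₁ := h₁.ne
    by_cases hcaseb : ∃ z, z ∈ Z₀ ∧ G.Adj y z
    · -- case (b) : hang off v₁ containing y
      obtain ⟨z', hzZ, hyz⟩ := hcaseb
      have hzsupp := hNy z' hyz
      have hzamb : z' ∈ amb := CC_subset hzZ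
      have hzp2 : z' ∈ p₂.support := by
        simp only [Walk.support_cons, List.mem_cons] at hzsupp
        rcases hzsupp with rfl | rfl | h
        · exact absurd rfl hyz.ne
        · exact absurd (by simp [hamb]) (fun hh : z' ∈ amb → False => hh hzamb)
        · exact h
      have hp2Z : ∀ x ∈ p₂.support, x ∈ Z₀ := by
        intro x hx
        exact GW.trans hzZ (GW.trans (hp2cc z' hzp2).symm (hp2cc x hx))
      have hclT : ∀ x ∈ (Z₀ ∪ {y} : Set V), ∀ u, G.Adj x u → u ∈ (Z₀ ∪ {y}) ∪ {v₁} := by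
        intro x hx u hxu
        rcases hx with hx | hx
        · by_cases hu : u ∈ amb
          · exact Or.inl (Or.inl (CC_closed hx hxu hu))
          · simp only [hamb, Set.mem_compl_iff, Set.mem_insert_iff,
              Set.mem_singleton_iff, not_not, not_forall] at hu
            rcases hu with rfl | rfl
            · exact Or.inl (Or.inr rfl)
            · exact Or.inr rfl
        · have hxy : x = y := by simpa using hx
          subst hxy
          have := hNy u hxu
          simp only [Walk.support_cons, List.mem_cons] at this
          rcases this with rfl | rfl | h
          · exact absurd rfl hxu.ne
          · exact Or.inr rfl
          · exact Or.inl (Or.inl (hp2Z u h))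
      refine ⟨v₁, CC G ({v₁}ᶜ : Set V) y, hv1X, isHang_cc1 hyne1, ?_⟩
      have hsub : CC G ({v₁}ᶜ : Set V) y ⊆ Z₀ ∪ {y} :=
        CC_subset_closed (Or.inr rfl) hclT
      refine ⟨fun q hq => ?_, fun hXsub => ?_⟩
      · rcases hsub hq with h | h
        · exact hZ₀X h
        · exact (by simpa using h : q = y) ▸ hyX
      · have : v₁ ∈ CC G ({v₁}ᶜ : Set V) y := hXsub hv1X
        exact (CC_subset this) rfl
    · -- case (a) : hang off v₁ not containing y
      push_neg at hcaseb
      have hclT : ∀ x ∈ Z₀, ∀ u, G.Adj x u → u ∈ Z₀ ∪ {v₁} := by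
        intro x hx u hxu
        by_cases hu : u ∈ amb
        · exact Or.inl (CC_closed hx hxu hu)
        · simp only [hamb, Set.mem_compl_iff, Set.mem_insert_iff,
            Set.mem_singleton_iff, not_not, not_forall] at hu
          rcases hu with rfl | rfl
          · exact absurd hxu.symm (hcaseb x hx)
          · exact Or.inr rfl
      have hwv1 : w ≠ v₁ := by
        intro hh
        apply (show v₁ ∉ amb by simp [hamb])
        exact hh ▸ hwamb
      refine ⟨v₁, CC G ({v₁}ᶜ : Set V) w, hv1X, isHang_cc1 hwv1, ?_⟩
      have hsub : CC G ({v₁}ᶜ : Set V) w ⊆ Z₀ := CC_subset_closed hwZ₀ hclT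
      refine ⟨fun q hq => hZ₀X (hsub hq), fun hXsub => ?_⟩
      have : v₁ ∈ CC G ({v₁}ᶜ : Set V) w := hXsub hv1X
      exact (CC_subset this) rfl

end SnailAux

namespace SnailAux

variable {V : Type*} [Fintype V] {G : SimpleGraph V}

lemma exists_not_mem_of_ncard_lt {S : Set V} (h : S.ncard < Fintype.card V) :
    ∃ x, x ∉ S := by
  by_contra h'
  push_neg at h'
  have hsub : (Set.univ : Set V) ⊆ S := fun x _ => h' x
  have := Set.ncard_le_ncard hsub (Set.toFinite S)
  rw [Set.ncard_univ, Nat.card_eq_fintype_card] at this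
  omega

lemma hang_pendant (hconn : G.Connected)
    (HA : ∀ u v : V, G.Adj u v → ¬ Scon G ({u, v}ᶜ : Set V))
    (hnt : Nontrivial V) {c : V} {X : Set V} (hH : IsHang G c X) :
    ∃ y c', y ∈ X ∧ c' ∈ X ∪ {c} ∧ G.neighborSet y = {c'} := by
  generalize hn : X.ncard = n
  induction n using Nat.strong_induction_on generalizing c X with
  | _ n ih =>
  by_cases h2 : 2 ≤ X.ncard
  · obtain ⟨c', X', hc'X, hH', hss⟩ := hang_step hconn HA hH h2
    have hlt : X'.ncard < n := hn ▸ Set.ncard_lt_ncard hss (Set.toFinite X)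
    obtain ⟨y, c'', hyX', hc'', hpend⟩ := ih _ hlt hH' rfl
    refine ⟨y, c'', hss.1 hyX', ?_, hpend⟩
    rcases hc'' with h | h
    · exact Or.inl (hss.1 h)
    · exact Or.inl ((show c'' = c' by simpa using h) ▸ hc'X)
  · -- |X| = 1
    have h1 : X.ncard = 1 := by
      have h0 : X.ncard ≠ 0 := by
        intro hh
        have := (Set.ncard_eq_zero (Set.toFinite X)).1 hh
        exact (this ▸ hH.1).ne_empty rfl
      omega
    obtain ⟨y, rfl⟩ := Set.ncard_eq_one.1 h1
    refine ⟨y, c, rfl, Or.inr rfl, ?_⟩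
    ext z
    simp only [mem_neighborSet, Set.mem_singleton_iff]
    constructor
    · intro hz
      rcases hH.2.2.1 y rfl z hz with h | h
      · exact absurd (by simpa using h) hz.ne'
      · simpa using h
    · intro hzc
      rw [hzc]
      obtain ⟨z', hz⟩ := exists_adj_of_connected hconn (exists_ne y)
      rcases hH.2.2.1 y rfl z' hz with h | h
      · exact absurd (by simpa using h) hz.ne'
      · exact (show z' = c by simpa using h) ▸ hz

lemma hang_horn (hconn : G.Connected)
    (HA : ∀ u v : V, G.Adj u v → ¬ Scon G ({u, v}ᶜ : Set V))
    (hnt : Nontrivial V) {c₀ y₀ : V} {X : Set V} (hH : IsHang G c₀ X)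
    (hpend : G.neighborSet y₀ = {c₀}) (hy₀ : y₀ ∉ X) :
    ∃ x y z : V, y ≠ z ∧ G.neighborSet y = {x} ∧ G.neighborSet z = {x} := by
  classical
  generalize hn : X.ncard = n
  induction n using Nat.strong_induction_on generalizing c₀ y₀ X with
  | _ n ih =>
  obtain ⟨y₂, c₂, hy₂X, hc₂, hpend₂⟩ := hang_pendant hconn HA hnt hH
  by_cases hc₂c : c₂ = c₀
  · exact ⟨c₀, y₀, y₂, fun h => hy₀ (h ▸ hy₂X), hpend, hc₂c ▸ hpend₂⟩
  · have hc₂X : c₂ ∈ X := by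
      rcases hc₂ with h | h
      · exact h
      · exact absurd (by simpa using h) hc₂c
    have hadj₂ : G.Adj y₂ c₂ := by
      have : c₂ ∈ G.neighborSet y₂ := by rw [hpend₂]; rfl
      exact this
    set amb := ({y₂, c₂}ᶜ : Set V) with hamb
    have hc₀amb : c₀ ∈ amb := by
      simp only [hamb, Set.mem_compl_iff, Set.mem_insert_iff, Set.mem_singleton_iff]
      push_neg
      exact ⟨fun h => (h ▸ hH.2.1) hy₂X, fun h => (h ▸ hH.2.1) hc₂X⟩
    have hnots : ¬ Scon G amb := HA y₂ c₂ hadj₂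
    have hex : ∃ w ∈ amb, ¬ GW G amb c₀ w := by
      by_contra hcon
      push_neg at hcon
      exact hnots (scon_of_base hc₀amb hcon)
    obtain ⟨w, hwamb, hwnr⟩ := hex
    set W₀ := CC G amb w with hW₀def
    have hwW₀ : w ∈ W₀ := mem_CC_self hwamb
    have hXamb : Xᶜ ⊆ amb := by
      intro q hq
      simp only [hamb, Set.mem_compl_iff, Set.mem_insert_iff, Set.mem_singleton_iff]
      push_neg
      exact ⟨fun h => hq (h ▸ hy₂X), fun h => hq (h ▸ hc₂X)⟩
    have hWX : W₀ ⊆ X := by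
      intro z hz
      by_contra hzX
      have h1 : GW G Xᶜ z c₀ := IsHang.outside hH hconn hzX
      exact hwnr (GW.symm (GW.trans hz (h1.mono hXamb)))
    have hclT : ∀ x ∈ W₀, ∀ u, G.Adj x u → u ∈ W₀ ∪ {c₂} := by
      intro x hx u hxu
      by_cases hu : u ∈ amb
      · exact Or.inl (CC_closed hx hxu hu)
      · simp only [hamb, Set.mem_compl_iff, Set.mem_insert_iff, Set.mem_singleton_iff,
          not_not, not_forall] at hu
        rcases hu with rfl | rfl
        · exfalso
          have : x ∈ G.neighborSet u := hxu.symm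
          rw [hpend₂] at this
          have hxc₂ : x = c₂ := by simpa using this
          have : c₂ ∈ amb := hxc₂ ▸ CC_subset hx
          simp [hamb] at this
        · exact Or.inr rfl
    have hwc₂ : w ≠ c₂ := by
      intro hh
      have : c₂ ∈ amb := hh ▸ hwamb
      simp [hamb] at this
    have hH' : IsHang G c₂ (CC G ({c₂}ᶜ : Set V) w) := isHang_cc1 hwc₂
    have hsub : CC G ({c₂}ᶜ : Set V) w ⊆ W₀ := CC_subset_closed hwW₀ hclT
    have hy₂notin : y₂ ∉ CC G ({c₂}ᶜ : Set V) w := by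
      intro h
      have : y₂ ∈ amb := CC_subset (hsub h)
      simp [hamb] at this
    have hss : CC G ({c₂}ᶜ : Set V) w ⊂ X := by
      refine ⟨fun q hq => hWX (hsub hq), fun hXsub => hy₂notin (hXsub hy₂X)⟩
    have hlt : (CC G ({c₂}ᶜ : Set V) w).ncard < n :=
      hn ▸ Set.ncard_lt_ncard hss (Set.toFinite X)
    exact ih _ hlt hH' hpend₂ hy₂notin rfl

/-- Part B main lemma. -/
lemma horn_of_HA (hconn : G.Connected)
    (HA : ∀ u v : V, G.Adj u v → ¬ Scon G ({u, v}ᶜ : Set V))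
    (h4 : 4 ≤ Fintype.card V) :
    ∃ x y z : V, y ≠ z ∧ G.neighborSet y = {x} ∧ G.neighborSet z = {x} := by
  classical
  have hnt : Nontrivial V := Fintype.one_lt_card_iff_nontrivial.1 (by omega)
  have hscon_univ : Scon G (Set.univ : Set V) :=
    ⟨Set.univ_nonempty, fun a _ b _ => ⟨(hconn.preconnected a b).some, fun _ _ => Set.mem_univ _⟩⟩
  have huniv3 : 3 ≤ (Set.univ : Set V).ncard := by
    rw [Set.ncard_univ, Nat.card_eq_fintype_card]; omega
  obtain ⟨m, z₁, z₂, _, _, _, hz12, ha1, ha2⟩ := exists_center hscon_univ huniv3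
  obtain ⟨cc, hcc⟩ : ∃ cc, cc ∉ ({m, z₁, z₂} : Set V) := by
    refine exists_not_mem_of_ncard_lt (lt_of_le_of_lt ?_ (by omega : 3 < Fintype.card V))
    calc ({m, z₁, z₂} : Set V).ncard ≤ ({z₁, z₂} : Set V).ncard + 1 := Set.ncard_insert_le _ _
    _ ≤ (({z₂} : Set V).ncard + 1) + 1 := by
        have := Set.ncard_insert_le z₁ ({z₂} : Set V)
        omega
    _ ≤ 3 := by simp
  simp only [Set.mem_insert_iff, Set.mem_singleton_iff] at hcc
  push_neg at hcc
  obtain ⟨y, v₁, v₂, e, h₁, h₂, p₂, hPpath, hPsupp, hPmax, hyc, hv1c⟩ :=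
    good_path (G := G) Set.univ cc
      ⟨m, z₁, z₂, trivial, trivial, trivial, hz12, fun h => hcc.1 h.symm,
        fun h => hcc.2.1 h.symm, ha1, ha2⟩
  -- phase 1: find a hang
  set amb := ({y, v₁}ᶜ : Set V) with hamb
  have hnots : ¬ Scon G amb := HA y v₁ h₁
  obtain ⟨a₀, ha₀⟩ : ∃ a₀, a₀ ∉ ({y, v₁} : Set V) := by
    refine exists_not_mem_of_ncard_lt (lt_of_le_of_lt ?_ (by omega : 3 < Fintype.card V))
    have := Set.ncard_insert_le y ({v₁} : Set V)
    simp only [Set.ncard_singleton] at this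
    omega
  have hambne : amb.Nonempty := ⟨a₀, ha₀⟩
  obtain ⟨u₁, hu₁, u₂, hu₂, hnr⟩ := exists_not_GW hnots hambne
  have hdisj : ∀ x, x ∈ CC G amb u₁ → x ∈ CC G amb u₂ → False := by
    intro x hx₁ hx₂
    exact hnr (GW.trans hx₁ (GW.symm hx₂))
  have hy_not : y ∉ (Walk.cons h₂ p₂).support := ((Walk.cons_isPath_iff _ _).1 hPpath).2
  have hv1_not : v₁ ∉ p₂.support :=
    ((Walk.cons_isPath_iff _ _).1 ((Walk.cons_isPath_iff _ _).1 hPpath).1).2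
  have hp2amb : ∀ x ∈ p₂.support, x ∈ amb := by
    intro x hx
    simp only [hamb, Set.mem_compl_iff, Set.mem_insert_iff, Set.mem_singleton_iff]
    push_neg
    constructor
    · rintro rfl; exact hy_not (by simp [hx])
    · rintro rfl; exact hv1_not hx
  have hp2cc : ∀ x ∈ p₂.support, GW G amb v₂ x := by
    intro x hx
    exact ⟨p₂.takeUntil x hx, fun z hz => hp2amb z (Walk.support_takeUntil_subset _ _ hz)⟩
  have key : ∃ w ∈ amb, ∀ x ∈ p₂.support, x ∉ CC G amb w := by
    by_cases hc1 : ∃ x ∈ p₂.support, x ∈ CC G amb u₁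
    · refine ⟨u₂, hu₂, ?_⟩
      obtain ⟨x₀, hx₀p, hx₀c⟩ := hc1
      intro x hx hxc
      have h1 : GW G amb u₁ x := GW.trans hx₀c (GW.trans (hp2cc x₀ hx₀p).symm (hp2cc x hx))
      exact hdisj x h1 hxc
    · push_neg at hc1
      exact ⟨u₁, hu₁, hc1⟩
  obtain ⟨w, hwamb, hwdisj⟩ := key
  have hNy : ∀ z, G.Adj y z → z ∈ (Walk.cons h₁ (Walk.cons h₂ p₂)).support :=
    fun z hz => hPmax z trivial hz
  have hclT : ∀ x ∈ CC G amb w, ∀ u, G.Adj x u → u ∈ CC G amb w ∪ {v₁} := by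
    intro x hx u hxu
    by_cases hu : u ∈ amb
    · exact Or.inl (CC_closed hx hxu hu)
    · simp only [hamb, Set.mem_compl_iff, Set.mem_insert_iff, Set.mem_singleton_iff,
        not_not, not_forall] at hu
      rcases hu with rfl | rfl
      · exfalso
        have hxs := hNy x hxu.symm
        simp only [Walk.support_cons, List.mem_cons] at hxs
        have hxamb : x ∈ amb := CC_subset hx
        rcases hxs with rfl | rfl | h
        · simp [hamb] at hxamb
        · simp [hamb] at hxamb
        · exact hwdisj x h hx
      · exact Or.inr rfl
  have hwv₁ : w ≠ v₁ := by
    intro hh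
    rw [hh] at hwamb
    simp [hamb] at hwamb
  have hH₁ : IsHang G v₁ (CC G ({v₁}ᶜ : Set V) w) := isHang_cc1 hwv₁
  -- get a pendant vertex
  obtain ⟨ys, cs, _, _, hpend⟩ := hang_pendant hconn HA hnt hH₁
  -- phase 2
  have hyscs : ys ≠ cs := by
    intro hh
    have : cs ∈ G.neighborSet ys := by rw [hpend]; rfl
    rw [← hh] at this
    exact G.irrefl this
  obtain ⟨w₂, hw₂⟩ : ∃ w₂, w₂ ∉ ({ys, cs} : Set V) := by
    refine exists_not_mem_of_ncard_lt (lt_of_le_of_lt ?_ (by omega : 3 < Fintype.card V))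
    have := Set.ncard_insert_le ys ({cs} : Set V)
    simp only [Set.ncard_singleton] at this
    omega
  simp only [Set.mem_insert_iff, Set.mem_singleton_iff] at hw₂
  push_neg at hw₂
  have hCCys : CC G ({cs}ᶜ : Set V) ys ⊆ {ys} := by
    refine CC_subset_closed rfl ?_
    intro x hx u hxu
    have hxys : x = ys := by simpa using hx
    subst hxys
    have : u ∈ G.neighborSet x := hxu
    rw [hpend] at this
    exact Or.inr this
  have hH₀ : IsHang G cs (CC G ({cs}ᶜ : Set V) w₂) := isHang_cc1 hw₂.2
  have hysnotin : ys ∉ CC G ({cs}ᶜ : Set V) w₂ := by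
    intro h
    have : w₂ ∈ CC G ({cs}ᶜ : Set V) ys := GW.symm h
    exact hw₂.1 (by simpa using hCCys this)
  exact hang_horn hconn HA hnt hH₀ hpend hysnotin

end SnailAux

namespace SnailAux

variable {V : Type*}

/-- the set of matching sizes (in vertices). -/
def MS (G : SimpleGraph V) : Set ℕ :=
  {n | ∃ M : G.Subgraph, M.IsMatching ∧ M.verts.ncard = n}

lemma zero_mem_MS (G : SimpleGraph V) : 0 ∈ MS G := by
  refine ⟨⊥, ?_, by simp⟩
  intro v hv
  simp only [Subgraph.verts_bot, Set.mem_empty_iff_false] at hv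

lemma MS_bddAbove [Finite V] (G : SimpleGraph V) : BddAbove (MS G) := by
  refine ⟨Nat.card V, ?_⟩
  rintro n ⟨M, _, rfl⟩
  have := Set.ncard_le_ncard (Set.subset_univ M.verts) (Set.toFinite _)
  rwa [Set.ncard_univ] at this

lemma deficiency_eq (G : SimpleGraph V) :
    deficiency G = Nat.card V - sSup (MS G) := rfl

/-- lift a matching of an induced subgraph to the ambient graph. -/
lemma lift_matching (G : SimpleGraph V) {s : Set V}
    (M : (G.induce s).Subgraph) (hM : M.IsMatching) :
    ∃ N : G.Subgraph, N.IsMatching ∧ N.verts = Subtype.val '' M.verts := by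
  let N : G.Subgraph :=
    { verts := Subtype.val '' M.verts
      Adj := fun x y => ∃ (hx : x ∈ s) (hy : y ∈ s), M.Adj ⟨x, hx⟩ ⟨y, hy⟩
      adj_sub := by rintro v w ⟨hv, hw, hadj⟩; exact M.adj_sub hadj
      edge_vert := by rintro v w ⟨hv, hw, hadj⟩; exact ⟨⟨v, hv⟩, M.edge_vert hadj, rfl⟩
      symm := ⟨by rintro v w ⟨hv, hw, hadj⟩; exact ⟨hw, hv, hadj.symm⟩⟩ }
  refine ⟨N, ?_, rfl⟩
  rintro v ⟨⟨a, ha⟩, haM, rfl⟩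
  obtain ⟨⟨b, hb⟩, hadj, huniq⟩ := hM haM
  refine ⟨b, ⟨ha, hb, hadj⟩, ?_⟩
  rintro y ⟨hy₁, hy₂, hy⟩
  have h2 : M.Adj ⟨a, ha⟩ ⟨y, hy₂⟩ := by
    convert hy
  exact congrArg Subtype.val (huniq ⟨y, hy₂⟩ h2)

lemma HA_of_crit [Fintype V] {G : SimpleGraph V} (hconn : G.Connected)
    (hcrit : ∀ s : Set V, s ≠ Set.univ → (G.induce s).Connected →
      deficiency (G.induce s) < deficiency G) :
    ∀ u v : V, G.Adj u v → ¬ Scon G ({u, v}ᶜ : Set V) := by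
  intro u v huv hS
  set s := ({u, v}ᶜ : Set V) with hs
  have hne : s ≠ Set.univ := by
    intro h
    have : u ∈ s := h ▸ Set.mem_univ u
    simp [hs] at this
  have hlt := hcrit s hne hS.connected
  have hms_mem : sSup (MS (G.induce s)) ∈ MS (G.induce s) :=
    Nat.sSup_mem ⟨0, zero_mem_MS _⟩ (MS_bddAbove _)
  obtain ⟨M, hM, hMcard⟩ := hms_mem
  obtain ⟨N, hN, hNverts⟩ := lift_matching G M hM
  have hNcard : N.verts.ncard = sSup (MS (G.induce s)) := by
    rw [hNverts, Set.ncard_image_of_injective _ Subtype.val_injective, hMcard]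
  have hNs : N.verts ⊆ s := by
    rw [hNverts]
    rintro x ⟨⟨a, ha⟩, _, rfl⟩
    exact ha
  have hdisj : Disjoint N.support (G.subgraphOfAdj huv).support := by
    rw [hN.support_eq_verts, support_subgraphOfAdj]
    rw [Set.disjoint_right]
    intro x hx hxN
    exact (hNs hxN) hx
  have hsupM : (N ⊔ G.subgraphOfAdj huv).IsMatching :=
    hN.sup (Subgraph.IsMatching.subgraphOfAdj huv) hdisj
  have hvdisj : Disjoint N.verts ({u, v} : Set V) := by
    rw [Set.disjoint_right]
    intro x hx hxN
    exact (hNs hxN) hx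
  have hvc : (N ⊔ G.subgraphOfAdj huv).verts.ncard = sSup (MS (G.induce s)) + 2 := by
    rw [Subgraph.verts_sup, subgraphOfAdj_verts,
      Set.ncard_union_eq hvdisj (Set.toFinite _) (Set.toFinite _), hNcard,
      Set.ncard_pair huv.ne]
  have hm2 : sSup (MS (G.induce s)) + 2 ≤ sSup (MS G) :=
    le_csSup (MS_bddAbove G) ⟨_, hsupM, hvc⟩
  have hmle : sSup (MS G) ≤ Fintype.card V := by
    obtain ⟨M₀, _, hc⟩ := Nat.sSup_mem (s := MS G) ⟨0, zero_mem_MS _⟩ (MS_bddAbove _)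
    rw [← hc]
    have := Set.ncard_le_ncard (Set.subset_univ M₀.verts) (Set.toFinite _)
    rwa [Set.ncard_univ, Nat.card_eq_fintype_card] at this
  have hcards : Nat.card ↥s = Fintype.card V - 2 := by
    rw [Nat.card_coe_set_eq]
    have h1 := Set.ncard_add_ncard_compl s (Set.toFinite _)
    have hsc : sᶜ = ({u, v} : Set V) := by rw [hs, compl_compl]
    rw [hsc, Set.ncard_pair huv.ne, Nat.card_eq_fintype_card] at h1
    omega
  have e1 : deficiency (G.induce s) = Nat.card ↥s - sSup (MS (G.induce s)) :=
    deficiency_eq _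
  have e2 : deficiency G = Nat.card V - sSup (MS G) := deficiency_eq _
  rw [e1, e2, hcards, Nat.card_eq_fintype_card] at hlt
  omega

lemma singleton_deficiency (G : SimpleGraph V) (x : V) :
    deficiency (G.induce ({x} : Set V)) = 1 := by
  have hMS : MS (G.induce ({x} : Set V)) = {0} := by
    ext n
    simp only [Set.mem_singleton_iff]
    constructor
    · rintro ⟨M, hM, rfl⟩
      have hv : M.verts = ∅ := by
        by_contra h
        obtain ⟨v, hv⟩ := Set.nonempty_iff_ne_empty.2 h
        obtain ⟨w, hw, _⟩ := hM hv
        have hGadj : G.Adj ↑v ↑w := M.adj_sub hw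
        have hvx : (v : V) = x := v.2
        have hwx : (w : V) = x := w.2
        rw [hvx, hwx] at hGadj
        exact G.irrefl hGadj
      simp [hv]
    · rintro rfl
      exact zero_mem_MS _
  rw [deficiency_eq, hMS, csSup_singleton, Nat.card_coe_set_eq, Set.ncard_singleton]

theorem stmt_3' [Fintype V] {G : SimpleGraph V}
    (hconn : G.Connected) (hnontrivial : 2 ≤ Fintype.card V)
    (hcrit : ∀ s : Set V, s ≠ Set.univ → (G.induce s).Connected →
      deficiency (G.induce s) < deficiency G) :
    ∃ x y z : V, y ≠ z ∧ G.neighborSet y = {x} ∧ G.neighborSet z = {x} := by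
  classical
  have hnt : Nontrivial V := Fintype.one_lt_card_iff_nontrivial.1 (by omega)
  obtain ⟨x₀, y₀, hxy₀⟩ := hnt.exists_pair_ne
  obtain ⟨w₀, hw₀⟩ := exists_adj_of_connected hconn ⟨y₀, hxy₀.symm⟩
  have hm2 : 2 ≤ sSup (MS G) := by
    refine le_csSup (MS_bddAbove G)
      ⟨G.subgraphOfAdj hw₀, Subgraph.IsMatching.subgraphOfAdj hw₀, ?_⟩
    rw [subgraphOfAdj_verts, Set.ncard_pair hw₀.ne]
  have hd : 1 < deficiency G := by
    have hne : ({x₀} : Set V) ≠ Set.univ := by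
      intro h
      have : y₀ ∈ ({x₀} : Set V) := h ▸ Set.mem_univ y₀
      exact hxy₀ (by simpa using this.symm)
    have hconn1 : (G.induce ({x₀} : Set V)).Connected := by
      haveI : Nonempty ↥({x₀} : Set V) := ⟨⟨x₀, rfl⟩⟩
      constructor
      intro a b
      have hab : a = b := Subtype.ext (a.2.trans b.2.symm)
      exact hab ▸ Reachable.refl a
    have := hcrit {x₀} hne hconn1
    rwa [singleton_deficiency] at this
  have h4 : 4 ≤ Fintype.card V := by
    rw [deficiency_eq, Nat.card_eq_fintype_card] at hd
    omega
  exact horn_of_HA hconn (HA_of_crit hconn hcrit) h4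

end SnailAux

end SnailAuxSection

theorem stmt_3 {V : Type*} [Fintype V] (G : SimpleGraph V)
    (hconn : G.Connected) (hnontrivial : 2 ≤ Fintype.card V)
    (hcrit : ∀ s : Set V, s ≠ Set.univ → (G.induce s).Connected →
      deficiency (G.induce s) < deficiency G) :
    ∃ x y z : V, y ≠ z ∧ G.neighborSet y = {x} ∧ G.neighborSet z = {x} := by
  exact SnailAux.stmt_3' hconn hnontrivial hcrit
end

section
/- Let G be a nontrivial deficiency-critical connected graph, let the vertex set be partitioned into levels L_0, L_1, ..., L_N by distance from a fixed vertex x_0 (L_i = vertices at distance i), with L_N the last nonempty level. Then for every vertex x ∈ L_{N-1} having a neighbor in L_N, there exist two distinct vertices y₁, y₂ ∈ L_N with N(y₁) = N(y₂) = {x}. -/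
open SimpleGraph

private lemma matchset_bddAbove {W : Type*} [Finite W] (H : SimpleGraph W) :
    ∀ n ∈ {n | ∃ M : H.Subgraph, M.IsMatching ∧ M.verts.ncard = n}, n ≤ Nat.card W := by
  rintro n ⟨M, -, rfl⟩
  simpa [Set.ncard_univ] using Set.ncard_le_ncard (Set.subset_univ M.verts) Set.finite_univ

private lemma matchset_zero_mem {W : Type*} (H : SimpleGraph W) :
    0 ∈ {n | ∃ M : H.Subgraph, M.IsMatching ∧ M.verts.ncard = n} := by
  refine ⟨⊥, fun v hv => ?_, by simp⟩
  simp only [SimpleGraph.Subgraph.verts_bot, Set.mem_empty_iff_false] at hv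

/-- There is a matching realizing the deficiency. -/
private lemma exists_max_matching {W : Type*} [Finite W] (H : SimpleGraph W) :
    ∃ M : H.Subgraph, M.IsMatching ∧ M.verts.ncard + deficiency H = Nat.card W := by
  classical
  have hbdd : BddAbove {n | ∃ M : H.Subgraph, M.IsMatching ∧ M.verts.ncard = n} :=
    ⟨Nat.card W, fun n hn => matchset_bddAbove H n hn⟩
  have hmem := Nat.sSup_mem ⟨0, matchset_zero_mem H⟩ hbdd
  obtain ⟨M, hM, hMc⟩ := hmem
  have hle : sSup {n | ∃ M : H.Subgraph, M.IsMatching ∧ M.verts.ncard = n} ≤ Nat.card W :=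
    matchset_bddAbove H _ ⟨M, hM, hMc⟩
  have hdef : deficiency H
      = Nat.card W - sSup {n | ∃ M : H.Subgraph, M.IsMatching ∧ M.verts.ncard = n} := rfl
  exact ⟨M, hM, by omega⟩

/-- The inclusion homomorphism from an induced subgraph. -/
private def inclHom {V : Type*} (G : SimpleGraph V) (s : Set V) : G.induce s →g G :=
  ⟨Subtype.val, fun {a b} h => h⟩

/-- Key contradiction: in a deficiency-critical graph, if `u v` are adjacent and removing both
keeps the graph connected, we get a contradiction. -/
private lemma key {V : Type*} [Fintype V] (G : SimpleGraph V)
    (hcrit : ∀ s : Set V, s ≠ Set.univ → (G.induce s).Connected →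
      deficiency (G.induce s) < deficiency G)
    {u v : V} (hne : u ≠ v) (hadj : G.Adj u v)
    (hs : (G.induce (({u, v} : Set V)ᶜ)).Connected) : False := by
  classical
  set s : Set V := ({u, v} : Set V)ᶜ with hsdef
  have hu : u ∉ s := by simp [hsdef]
  have hsne : s ≠ Set.univ := by
    intro h
    exact hu (h ▸ Set.mem_univ u)
  have hlt := hcrit s hsne hs
  obtain ⟨M₀, hM₀, hsup⟩ := exists_max_matching (G.induce s)
  have hinj : Function.Injective (inclHom G s) := fun a b h => Subtype.val_injective h
  set M : G.Subgraph := M₀.map (inclHom G s) with hMdef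
  have hMm : M.IsMatching := hM₀.map (inclHom G s) hinj
  have hverts : M.verts = Subtype.val '' M₀.verts := rfl
  have hMsub : M.verts ⊆ s := by
    rw [hverts]
    rintro a ⟨⟨b, hb⟩, -, rfl⟩
    exact hb
  have hMcard : M.verts.ncard = M₀.verts.ncard := by
    rw [hverts]
    exact Set.ncard_image_of_injective _ Subtype.val_injective
  set E : G.Subgraph := G.subgraphOfAdj hadj with hEdef
  have hEm : E.IsMatching := Subgraph.IsMatching.subgraphOfAdj hadj
  have hEverts : E.verts = {u, v} := rfl
  have hdisjv : Disjoint M.verts E.verts := by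
    rw [hEverts]
    rw [Set.disjoint_right]
    intro a ha
    exact fun haM => (hMsub haM) ha
  have hdisj : Disjoint M.support E.support := by
    rw [hMm.support_eq_verts, hEm.support_eq_verts]
    exact hdisjv
  have hUm : (M ⊔ E).IsMatching := hMm.sup hEm hdisj
  have hUverts : (M ⊔ E).verts = M.verts ∪ E.verts := Subgraph.verts_sup M E
  have hUcard : (M ⊔ E).verts.ncard = M.verts.ncard + 2 := by
    rw [hUverts, Set.ncard_union_eq hdisjv (Set.toFinite _) (Set.toFinite _), hEverts,
      Set.ncard_pair hne]
  have hmem : (M ⊔ E).verts.ncard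
      ∈ {n | ∃ M' : G.Subgraph, M'.IsMatching ∧ M'.verts.ncard = n} := ⟨M ⊔ E, hUm, rfl⟩
  have hbdd : BddAbove {n | ∃ M' : G.Subgraph, M'.IsMatching ∧ M'.verts.ncard = n} :=
    ⟨Nat.card V, fun n hn => matchset_bddAbove G n hn⟩
  have hle := le_csSup hbdd hmem
  have hdefG : deficiency G
      = Nat.card V - sSup {n | ∃ M' : G.Subgraph, M'.IsMatching ∧ M'.verts.ncard = n} := rfl
  have hcompl : ({u, v} : Set V).ncard + s.ncard = Nat.card V := by
    rw [hsdef]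
    exact Set.ncard_add_ncard_compl _ (Set.toFinite _) (Set.toFinite _)
  have hpair : ({u, v} : Set V).ncard = 2 := Set.ncard_pair hne
  have hscard : Nat.card ↥s = s.ncard := Nat.card_coe_set_eq s
  rw [hscard] at hsup
  omega

/-- Every non-root vertex has a neighbor strictly closer to the root. -/
private lemma exists_pred {V : Type*} (G : SimpleGraph V) (hconn : G.Connected) {x₀ v : V}
    (hne : v ≠ x₀) : ∃ w, G.Adj v w ∧ G.dist x₀ w + 1 ≤ G.dist x₀ v := by
  obtain ⟨p, hp⟩ := hconn.exists_walk_length_eq_dist v x₀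
  revert hp
  cases p with
  | nil => exact absurd rfl hne
  | @cons _ w _ h q =>
      intro hp
      refine ⟨w, h, ?_⟩
      have e1 : G.dist w x₀ ≤ q.length := dist_le q
      have e2 : q.length + 1 = G.dist v x₀ := by
        rw [← hp, Walk.length_cons]
      have e3 : G.dist x₀ w = G.dist w x₀ := dist_comm
      have e4 : G.dist x₀ v = G.dist v x₀ := dist_comm
      omega

/-- Connectivity criterion for induced subgraphs: if every vertex of `s` other than the root has a
neighbor in `s` strictly closer to the root, then the induced subgraph is connected. -/
private lemma conn_of {V : Type*} (G : SimpleGraph V) (hconn : G.Connected) (x₀ : V) (s : Set V)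
    (hx₀ : x₀ ∈ s)
    (h : ∀ v, v ∈ s → v ≠ x₀ → ∃ w, w ∈ s ∧ G.Adj v w ∧ G.dist x₀ w < G.dist x₀ v) :
    (G.induce s).Connected := by
  have main : ∀ n, ∀ v, ∀ hv : v ∈ s, G.dist x₀ v ≤ n →
      (G.induce s).Reachable ⟨v, hv⟩ ⟨x₀, hx₀⟩ := by
    intro n
    induction n with
    | zero =>
        intro v hv hd
        have hv0 : x₀ = v := (hconn.dist_eq_zero_iff).mp (Nat.le_zero.mp hd)
        subst hv0
        exact Reachable.refl _
    | succ n ih =>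
        intro v hv hd
        by_cases hvx : v = x₀
        · subst hvx
          exact Reachable.refl _
        · obtain ⟨w, hws, hadj, hlt⟩ := h v hv hvx
          have hw' : G.dist x₀ w ≤ n := by omega
          have ha : (G.induce s).Adj ⟨v, hv⟩ ⟨w, hws⟩ := hadj
          exact ha.reachable.trans (ih w hws hw')
  haveI : Nonempty ↥s := ⟨⟨x₀, hx₀⟩⟩
  refine Connected.mk fun a b => ?_
  have ra := main (G.dist x₀ a.1) a.1 a.2 le_rfl
  have rb := main (G.dist x₀ b.1) b.1 b.2 le_rfl
  exact ra.trans rb.symm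

theorem stmt_4 {V : Type*} [Fintype V] (G : SimpleGraph V)
    (hconn : G.Connected) (hnontrivial : 2 ≤ Fintype.card V)
    (hcrit : ∀ s : Set V, s ≠ Set.univ → (G.induce s).Connected →
      deficiency (G.induce s) < deficiency G)
    (x₀ : V) (N : ℕ)
    (hNmax : ∀ v, G.dist x₀ v ≤ N) (hNne : ∃ v, G.dist x₀ v = N)
    (x : V) (hx : G.dist x₀ x = N - 1)
    (hxnbr : ∃ y, G.Adj x y ∧ G.dist x₀ y = N) :
    ∃ y₁ y₂ : V, y₁ ≠ y₂ ∧ G.dist x₀ y₁ = N ∧ G.dist x₀ y₂ = N ∧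
      G.neighborSet y₁ = {x} ∧ G.neighborSet y₂ = {x} := by
  classical
  obtain ⟨y, hxy, hyN⟩ := hxnbr
  -- N ≥ 1
  have hN1 : 1 ≤ N := by
    by_contra hN0
    have hN0' : N = 0 := by omega
    subst hN0'
    have hy0 : x₀ = y := (hconn.dist_eq_zero_iff).mp hyN
    have hx0 : x₀ = x := (hconn.dist_eq_zero_iff).mp (by simpa using hx)
    subst hy0
    exact G.irrefl (hx0 ▸ hxy)
  -- independence of the last level
  have indep : ∀ u₁ u₂ : V, G.dist x₀ u₁ = N → G.dist x₀ u₂ = N → u₁ ≠ u₂ →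
      ¬ G.Adj u₁ u₂ := by
    intro u₁ u₂ h1 h2 hne hadj
    have hx₀s : x₀ ∈ ({u₁, u₂} : Set V)ᶜ := by
      simp only [Set.mem_compl_iff, Set.mem_insert_iff, Set.mem_singleton_iff]
      push_neg
      constructor
      · intro h; rw [← h] at h1; simp [SimpleGraph.dist_self] at h1; omega
      · intro h; rw [← h] at h2; simp [SimpleGraph.dist_self] at h2; omega
    have hsconn : (G.induce (({u₁, u₂} : Set V)ᶜ)).Connected := by
      refine conn_of G hconn x₀ _ hx₀s ?_
      intro v hv hvx
      obtain ⟨w, hadjw, hdw⟩ := exists_pred G hconn hvx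
      refine ⟨w, ?_, hadjw, by omega⟩
      simp only [Set.mem_compl_iff, Set.mem_insert_iff, Set.mem_singleton_iff]
      push_neg
      have hvN : G.dist x₀ v ≤ N := hNmax v
      constructor
      · intro h; rw [h, h1] at hdw; omega
      · intro h; rw [h, h2] at hdw; omega
    exact key G hcrit hne hadj hsconn
  -- case N = 1
  rcases eq_or_lt_of_le hN1 with hN1' | hN2
  · -- N = 1 : x = x₀ and every other vertex is a pendant neighbor of x₀
    have hNval : N = 1 := hN1'.symm
    subst hNval
    have hx0 : x₀ = x := (hconn.dist_eq_zero_iff).mp (by simpa using hx)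
    -- card V ≥ 3, otherwise contradiction with hcrit on a singleton
    have h3 : 3 ≤ Fintype.card V := by
      by_contra hcard
      have hcard2 : Fintype.card V = 2 := by omega
      -- G is a single edge, so deficiency G = 0
      have hyx : x ≠ y := G.ne_of_adj hxy
      have hfull : ({x, y} : Set V).ncard = Nat.card V := by
        rw [Set.ncard_pair hyx, Nat.card_eq_fintype_card, hcard2]
      have hmem : (2 : ℕ) ∈ {n | ∃ M : G.Subgraph, M.IsMatching ∧ M.verts.ncard = n} := by
        refine ⟨G.subgraphOfAdj hxy, Subgraph.IsMatching.subgraphOfAdj hxy, ?_⟩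
        show ({x, y} : Set V).ncard = 2
        exact Set.ncard_pair hyx
      have hbdd : BddAbove {n | ∃ M : G.Subgraph, M.IsMatching ∧ M.verts.ncard = n} :=
        ⟨Nat.card V, fun n hn => matchset_bddAbove G n hn⟩
      have hle := le_csSup hbdd hmem
      have hdefG : deficiency G
          = Nat.card V - sSup {n | ∃ M : G.Subgraph, M.IsMatching ∧ M.verts.ncard = n} := rfl
      have hD0 : deficiency G = 0 := by
        rw [hdefG]
        have : Nat.card V = 2 := by rw [Nat.card_eq_fintype_card, hcard2]
        omega
      have hxone : ({x₀} : Set V) ≠ Set.univ := by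
        intro h
        have hy' : y ∈ ({x₀} : Set V) := h ▸ Set.mem_univ y
        have : y = x₀ := hy'
        rw [this] at hyN
        simp [SimpleGraph.dist_self] at hyN
      have hxconn : (G.induce ({x₀} : Set V)).Connected := by
        haveI : Nonempty ↥({x₀} : Set V) := ⟨⟨x₀, rfl⟩⟩
        refine Connected.mk fun a b => ?_
        have : a = b := by
          ext
          have ha : (a : V) ∈ ({x₀} : Set V) := a.2
          have hb : (b : V) ∈ ({x₀} : Set V) := b.2
          rw [ha, hb]
        rw [this]
      have := hcrit {x₀} hxone hxconn
      rw [hD0] at this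
      omega
    -- get two vertices distinct from x₀
    have herase : 2 ≤ (Finset.univ.erase x₀).card := by
      rw [Finset.card_erase_of_mem (Finset.mem_univ x₀), Finset.card_univ]
      omega
    obtain ⟨a, ha, b, hb, hab⟩ := Finset.one_lt_card.mp (by omega : 1 < (Finset.univ.erase x₀).card)
    have ha' : a ≠ x₀ := Finset.ne_of_mem_erase ha
    have hb' : b ≠ x₀ := Finset.ne_of_mem_erase hb
    -- each v ≠ x₀ is at distance 1 with neighborSet = {x₀}
    have hpend : ∀ v : V, v ≠ x₀ → G.dist x₀ v = 1 ∧ G.neighborSet v = {x₀} := by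
      intro v hv
      have hd1 : G.dist x₀ v = 1 := by
        have hle1 : G.dist x₀ v ≤ 1 := hNmax v
        have hne0 : G.dist x₀ v ≠ 0 := by
          intro h
          exact hv ((hconn.dist_eq_zero_iff).mp h).symm
        omega
      refine ⟨hd1, ?_⟩
      ext z
      simp only [mem_neighborSet, Set.mem_singleton_iff]
      constructor
      · intro hadj
        by_contra hz
        have hdz : G.dist x₀ z = 1 := by
          have hle1 : G.dist x₀ z ≤ 1 := hNmax z
          have hne0 : G.dist x₀ z ≠ 0 := by
            intro h
            exact hz ((hconn.dist_eq_zero_iff).mp h).symm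
          omega
        exact indep v z hd1 hdz (G.ne_of_adj hadj) hadj
      · intro hz
        obtain ⟨w, hadjw, hdw⟩ := exists_pred G hconn hv
        have hw0 : x₀ = w := by
          have h0 : G.dist x₀ w = 0 := by rw [hd1] at hdw; omega
          exact (hconn.dist_eq_zero_iff).mp h0
        rw [hz, hw0]
        exact hadjw
    obtain ⟨hda, hna⟩ := hpend a ha'
    obtain ⟨hdb, hnb⟩ := hpend b hb'
    exact ⟨a, b, hab, hda, hdb, hx0 ▸ hna, hx0 ▸ hnb⟩
  -- case N ≥ 2
  · by_contra hgoal
    push_neg at hgoal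
    -- no two distinct pendant vertices; find the distinguished vertex q
    have hxne : x ≠ x₀ := by
      intro h
      rw [h] at hx
      simp [SimpleGraph.dist_self] at hx
      omega
    -- choose q
    have hqex : ∃ q : V, G.Adj x q ∧ G.dist x₀ q = N ∧
        (∀ v : V, G.dist x₀ v = N → v ≠ q → G.neighborSet v ≠ {x}) := by
      by_cases hA : ∃ p : V, p ≠ y ∧ G.dist x₀ p = N ∧ G.neighborSet p = {x}
      · obtain ⟨p, hpy, hpN, hpnb⟩ := hA
        have hpx : G.Adj x p := by
          have hmem : x ∈ G.neighborSet p := by rw [hpnb]; rfl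
          exact ((G.mem_neighborSet p x).mp hmem).symm
        refine ⟨p, hpx, hpN, ?_⟩
        intro v hvN hvp hvnb
        exact (hgoal v p hvp hvN hpN hvnb) hpnb
      · push_neg at hA
        refine ⟨y, hxy, hyN, ?_⟩
        intro v hvN hvy
        exact hA v hvy hvN
    obtain ⟨q, hxq, hqN, hq3⟩ := hqex
    have hxqne : x ≠ q := by
      intro h
      rw [h, hqN] at hx
      omega
    have hx₀s : x₀ ∈ ({x, q} : Set V)ᶜ := by
      simp only [Set.mem_compl_iff, Set.mem_insert_iff, Set.mem_singleton_iff]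
      push_neg
      constructor
      · exact fun h => hxne h.symm
      · intro h
        rw [← h] at hqN
        simp [SimpleGraph.dist_self] at hqN
        omega
    have hsconn : (G.induce (({x, q} : Set V)ᶜ)).Connected := by
      refine conn_of G hconn x₀ _ hx₀s ?_
      intro v hv hvx₀
      simp only [Set.mem_compl_iff, Set.mem_insert_iff, Set.mem_singleton_iff] at hv
      push_neg at hv
      obtain ⟨hvx, hvq⟩ := hv
      by_cases hvN : G.dist x₀ v = N
      · -- v is at the last level, v ≠ q, so neighborSet v ≠ {x}
        have hnb : G.neighborSet v ≠ {x} := hq3 v hvN hvq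
        obtain ⟨w₀, hadjw₀, -⟩ := exists_pred G hconn hvx₀
        have hz : ∃ z, G.Adj v z ∧ z ≠ x := by
          by_contra hz
          push_neg at hz
          apply hnb
          ext z
          simp only [mem_neighborSet, Set.mem_singleton_iff]
          constructor
          · exact fun h => hz z h
          · intro h
            subst h
            have := hz w₀ hadjw₀
            rwa [this] at hadjw₀
        obtain ⟨z, hadjz, hzx⟩ := hz
        have hzN : G.dist x₀ z ≠ N := by
          intro hzN
          exact indep v z hvN hzN (G.ne_of_adj hadjz) hadjz
        have hzle : G.dist x₀ z ≤ N := hNmax z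
        refine ⟨z, ?_, hadjz, by omega⟩
        simp only [Set.mem_compl_iff, Set.mem_insert_iff, Set.mem_singleton_iff]
        push_neg
        refine ⟨hzx, ?_⟩
        intro h
        rw [h, hqN] at hzN
        exact hzN rfl
      · -- v at distance < N : use predecessor
        obtain ⟨w, hadjw, hdw⟩ := exists_pred G hconn hvx₀
        have hvle : G.dist x₀ v ≤ N := hNmax v
        refine ⟨w, ?_, hadjw, by omega⟩
        simp only [Set.mem_compl_iff, Set.mem_insert_iff, Set.mem_singleton_iff]
        push_neg
        constructor
        · intro h
          rw [h, hx] at hdw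
          omega
        · intro h
          rw [h, hqN] at hdw
          omega
    exact key G hcrit hxqne hxq hsconn
end

section
/- Let T_{m,n} (m ≥ 5 odd, n > 3) be the rooted tree whose vertices at distance i from the root form level L_i for 0 ≤ i ≤ m−2, where vertices in even levels L_0, L_2, ..., L_{m−3} have degree n−1, vertices in odd levels L_1, L_3, ..., L_{m−4} have degree 2, and vertices in L_{m−2} are leaves. Then def(T_{m,n}) = (n−1)(n−2)^{(m−3)/2} − 1. -/
open SimpleGraph

section TreeAux

variable {V : Type*} {G : SimpleGraph V}

lemma tree_path_length_eq_dist (ht : G.IsTree) {u v : V} (p : G.Walk u v) (hp : p.IsPath) :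
    p.length = G.dist u v := by
  classical
  obtain ⟨w, hw⟩ := (ht.isConnected.1 u v).exists_walk_length_eq_dist
  have hb : w.bypass.IsPath := w.bypass_isPath
  have hlen : w.bypass.length ≤ w.length := Walk.length_bypass_le w
  obtain ⟨q, hq, huniq⟩ := ht.existsUnique_path u v
  have h1 : p = w.bypass := (huniq p hp).trans (huniq w.bypass hb).symm
  have h2 : G.dist u v ≤ w.bypass.length := G.dist_le _
  have h3 := congrArg Walk.length h1
  omega

lemma exists_geodesic (ht : G.IsTree) (u v : V) :
    ∃ p : G.Walk u v, p.IsPath ∧ p.length = G.dist u v := by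
  classical
  obtain ⟨w, hw⟩ := (ht.isConnected.1 u v).exists_walk_length_eq_dist
  exact ⟨w.bypass, w.bypass_isPath, tree_path_length_eq_dist ht _ w.bypass_isPath⟩

lemma concat_isPath {u v w : V} {p : G.Walk u v} (hp : p.IsPath) (h : G.Adj v w)
    (hw : w ∉ p.support) : (p.concat h).IsPath := by
  rw [← Walk.isPath_reverse_iff, Walk.reverse_concat]
  exact (hp.reverse).cons (by simpa using hw)

lemma tree_adj_dist (ht : G.IsTree) (r : V) {u v : V} (h : G.Adj u v) :
    G.dist r v = G.dist r u + 1 ∨ G.dist r u = G.dist r v + 1 := by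
  classical
  have key : ∀ a b : V, G.Adj a b → G.dist r a ≤ G.dist r b →
      G.dist r b = G.dist r a + 1 := by
    intro a b hab hle
    have htri : G.dist r b ≤ G.dist r a + 1 := by
      calc G.dist r b ≤ G.dist r a + G.dist a b := (ht.isConnected.dist_triangle)
        _ = G.dist r a + 1 := by rw [dist_eq_one_iff_adj.mpr hab]
    rcases Nat.lt_or_ge (G.dist r b) (G.dist r a + 1) with hlt | hge
    · exfalso
      have heq : G.dist r b = G.dist r a := le_antisymm (by omega) hle
      obtain ⟨p, hp, hplen⟩ := exists_geodesic ht r a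
      by_cases hbp : b ∈ p.support
      · have h1 : (p.takeUntil b hbp).length = G.dist r b :=
          tree_path_length_eq_dist ht _ (hp.takeUntil hbp)
        have h2 := congrArg Walk.length (p.take_spec hbp)
        rw [Walk.length_append] at h2
        have : (p.dropUntil b hbp).length = 0 := by omega
        have hba : b = a := by
          have := Walk.eq_of_length_eq_zero this
          exact this
        exact G.irrefl (hba ▸ hab)
      · have hq : (p.concat hab).IsPath := concat_isPath hp hab hbp
        have := tree_path_length_eq_dist ht _ hq
        rw [Walk.length_concat] at this
        omega
    · omega
  rcases Nat.le_total (G.dist r u) (G.dist r v) with hle | hle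
  · exact Or.inl (key u v h hle)
  · exact Or.inr (key v u h.symm hle)

lemma tree_parent_exists (ht : G.IsTree) (r : V) {v : V} (hv : 0 < G.dist r v) :
    ∃ u, G.Adj u v ∧ G.dist r u + 1 = G.dist r v := by
  classical
  obtain ⟨p, hp, hplen⟩ := exists_geodesic ht r v
  cases hq : p.reverse with
  | nil =>
    exfalso
    have h0 : p.length = 0 := by simpa using congrArg Walk.length hq
    omega
  | cons h q =>
    rename_i u
    refine ⟨u, h.symm, ?_⟩
    have hlen := congrArg Walk.length hq
    rw [Walk.length_reverse, Walk.length_cons] at hlen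
    have h1 : G.dist r u ≤ q.reverse.length := G.dist_le _
    rw [Walk.length_reverse] at h1
    have h2 : G.dist r v ≤ G.dist r u + 1 := by
      calc G.dist r v ≤ G.dist r u + G.dist u v := ht.isConnected.dist_triangle
        _ ≤ G.dist r u + 1 := by
            have := dist_eq_one_iff_adj.mpr h.symm
            omega
    omega

lemma not_mem_geodesic_support (ht : G.IsTree) (r : V) {u v : V} {p : G.Walk r u}
    (hp : p.IsPath) (hd : p.length < G.dist r v) : v ∉ p.support := by
  classical
  intro hmem
  have h1 : (p.takeUntil v hmem).length = G.dist r v :=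
    tree_path_length_eq_dist ht _ (hp.takeUntil hmem)
  have h2 := Walk.length_takeUntil_le p hmem
  omega

lemma tree_parent_unique (ht : G.IsTree) (r : V) {u₁ u₂ v : V}
    (h1 : G.Adj u₁ v) (h2 : G.Adj u₂ v)
    (hd1 : G.dist r u₁ + 1 = G.dist r v) (hd2 : G.dist r u₂ + 1 = G.dist r v) :
    u₁ = u₂ := by
  classical
  obtain ⟨p₁, hp₁, hl₁⟩ := exists_geodesic ht r u₁
  obtain ⟨p₂, hp₂, hl₂⟩ := exists_geodesic ht r u₂
  have hv₁ : v ∉ p₁.support := not_mem_geodesic_support ht r hp₁ (by omega)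
  have hv₂ : v ∉ p₂.support := not_mem_geodesic_support ht r hp₂ (by omega)
  have hq₁ : (p₁.concat h1).IsPath := concat_isPath hp₁ h1 hv₁
  have hq₂ : (p₂.concat h2).IsPath := concat_isPath hp₂ h2 hv₂
  obtain ⟨q, hq, huniq⟩ := ht.existsUnique_path r v
  have heq : p₁.concat h1 = p₂.concat h2 := (huniq _ hq₁).trans (huniq _ hq₂).symm
  have hsup := congrArg (fun w => w.reverse.support) heq
  simp only [Walk.reverse_concat, Walk.support_cons] at hsup
  rw [p₁.reverse.support_eq_cons, p₂.reverse.support_eq_cons] at hsup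
  rw [List.cons_eq_cons, List.cons_eq_cons] at hsup
  exact hsup.2.1

open Finset in
/-- children of v in the tree rooted at r -/
noncomputable def kids (G : SimpleGraph V) [Fintype V] (r v : V) : Finset V := by
  classical
  exact Finset.univ.filter (fun w => G.Adj v w ∧ G.dist r w = G.dist r v + 1)

open Finset in
lemma mem_kids (G : SimpleGraph V) [Fintype V] (r v w : V) :
    w ∈ kids G r v ↔ G.Adj v w ∧ G.dist r w = G.dist r v + 1 := by
  classical
  simp [kids]

/-- neighbors as a Finset, via classical decidability -/
noncomputable def nbrs (G : SimpleGraph V) [Fintype V] (v : V) : Finset V := by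
  classical
  exact Finset.univ.filter (fun w => G.Adj v w)

open Finset in
lemma mem_nbrs (G : SimpleGraph V) [Fintype V] (v w : V) :
    w ∈ nbrs G v ↔ G.Adj v w := by
  classical
  simp [nbrs]

open Finset in
lemma ncard_neighborSet_eq [Fintype V] (G : SimpleGraph V) (v : V) :
    (G.neighborSet v).ncard = (nbrs G v).card := by
  classical
  rw [← Set.ncard_coe_finset]
  congr 1
  ext w
  simp [mem_nbrs, neighborSet]

open Finset in
lemma kids_card_root [Fintype V] (ht : G.IsTree) (r v : V) (hd : G.dist r v = 0) :
    (kids G r v).card = (G.neighborSet v).ncard := by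
  classical
  have hv : v = r := ((ht.isConnected.1 r v).dist_eq_zero_iff.mp hd).symm
  subst hv
  rw [ncard_neighborSet_eq]
  congr 1
  ext w
  rw [mem_kids, mem_nbrs]
  constructor
  · exact fun h => h.1
  · intro h
    refine ⟨h, ?_⟩
    rw [hd]
    exact dist_eq_one_iff_adj.mpr h

open Finset in
lemma kids_card_nonroot [Fintype V] (ht : G.IsTree) (r v : V) (hd : 0 < G.dist r v) :
    (kids G r v).card + 1 = (G.neighborSet v).ncard := by
  classical
  obtain ⟨p, hpadj, hpd⟩ := tree_parent_exists ht r hd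
  have hsplit : nbrs G v = kids G r v ∪ {p} := by
    ext w
    rw [mem_nbrs, mem_union, mem_kids, mem_singleton]
    constructor
    · intro hadj
      rcases tree_adj_dist ht r hadj with h | h
      · exact Or.inl ⟨hadj, h⟩
      · exact Or.inr (tree_parent_unique ht r hadj.symm hpadj (by omega) (by omega))
    · rintro (⟨h, -⟩ | rfl)
      · exact h
      · exact hpadj.symm
  have hdisj : Disjoint (kids G r v) ({p} : Finset V) := by
    rw [Finset.disjoint_singleton_right, mem_kids]
    rintro ⟨-, h⟩
    omega
  rw [ncard_neighborSet_eq, hsplit, card_union_of_disjoint hdisj, card_singleton]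

open Finset in
/-- level recurrence -/
lemma level_card_succ [Fintype V] [DecidableEq V] (ht : G.IsTree) (r : V) (d : ℕ) :
    (Finset.univ.filter (fun v => G.dist r v = d + 1)).card
      = ∑ v ∈ Finset.univ.filter (fun v => G.dist r v = d), (kids G r v).card := by
  classical
  have hset : Finset.univ.filter (fun v => G.dist r v = d + 1)
      = (Finset.univ.filter (fun v => G.dist r v = d)).biUnion (fun v => kids G r v) := by
    ext w
    simp only [mem_filter, mem_univ, true_and, mem_biUnion, mem_kids]
    constructor
    · intro hw
      obtain ⟨u, hu, hud⟩ := tree_parent_exists ht r (by omega : 0 < G.dist r w)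
      exact ⟨u, by omega, hu, by omega⟩
    · rintro ⟨u, hu, -, h⟩
      omega
  rw [hset]
  apply card_biUnion
  intro v1 h1 v2 h2 hne
  simp only [Finset.mem_coe, mem_filter, mem_univ, true_and, Function.onFun] at h1 h2 ⊢
  rw [Finset.disjoint_left]
  intro w hw1 hw2
  rw [mem_kids] at hw1 hw2
  exact hne (tree_parent_unique ht r hw1.1 hw2.1 (by omega) (by omega))

lemma parity_flip (ht : G.IsTree) (r : V) {u v : V} (h : G.Adj u v)
    (hu : ¬ Even (G.dist r u)) : Even (G.dist r v) := by
  rw [Nat.even_iff] at hu ⊢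
  rcases tree_adj_dist ht r h with h' | h' <;> omega

open Set in
lemma matching_verts_le [Fintype V] (ht : G.IsTree) (r : V) (M : G.Subgraph)
    (hM : M.IsMatching) :
    M.verts.ncard ≤ 2 * {v | Even (G.dist r v)}.ncard := by
  classical
  set S := {v | Even (G.dist r v)} with hS
  have h1 : (M.verts ∩ S).ncard ≤ S.ncard :=
    Set.ncard_le_ncard inter_subset_right (Set.toFinite _)
  set f : V → V := fun w => if h : w ∈ M.verts then (hM h).exists.choose else w with hf
  have hfadj : ∀ w (h : w ∈ M.verts), M.Adj w (f w) := by
    intro w h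
    simp only [hf, dif_pos h]
    exact (hM h).exists.choose_spec
  have h2 : (M.verts \ S).ncard ≤ S.ncard := by
    apply Set.ncard_le_ncard_of_injOn f _ _ (Set.toFinite _)
    · rintro w ⟨hw, hws⟩
      exact parity_flip ht r (M.adj_sub (hfadj w hw)) hws
    · rintro w1 ⟨hw1, -⟩ w2 ⟨hw2, -⟩ heq
      have ha1 : M.Adj (f w1) w1 := (hfadj w1 hw1).symm
      have ha2 : M.Adj (f w1) w2 := heq ▸ (hfadj w2 hw2).symm
      have hu : f w1 ∈ M.verts := M.edge_vert ha1
      exact ((hM hu).unique ha1 ha2)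
  calc M.verts.ncard = (M.verts ∩ S).ncard + (M.verts \ S).ncard :=
        (Set.ncard_inter_add_ncard_diff_eq_ncard M.verts S).symm
    _ ≤ 2 * S.ncard := by omega

open Set in
lemma matching_exists [Fintype V] (ht : G.IsTree) (r : V)
    (hkids : ∀ v : V, Even (G.dist r v) → ∃ w, G.Adj v w ∧ G.dist r w = G.dist r v + 1) :
    ∃ M : G.Subgraph, M.IsMatching ∧ M.verts.ncard = 2 * {v | Even (G.dist r v)}.ncard := by
  classical
  set S := {v | Even (G.dist r v)} with hS
  set f : S → V := fun v => (hkids v v.2).choose with hf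
  have hfspec : ∀ v : S, G.Adj v (f v) ∧ G.dist r (f v) = G.dist r v + 1 :=
    fun v => (hkids v v.2).choose_spec
  have hinj : Function.Injective f := by
    intro v1 v2 heq
    have h1 := hfspec v1
    have h2 := hfspec v2
    rw [heq] at h1
    exact Subtype.ext (tree_parent_unique ht r h1.1 h2.1 h1.2.symm h2.2.symm)
  have hdisj : Disjoint S (Set.range f) := by
    rw [Set.disjoint_right]
    rintro x ⟨v, rfl⟩ hx
    have h1 := (hfspec v).2
    have hv : Even (G.dist r (v : V)) := v.2
    have hodd : Even (G.dist r (f v)) := hx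
    rw [h1, Nat.even_add_one] at hodd
    exact hodd hv
  obtain ⟨M, hverts, hmatch⟩ :=
    Subgraph.IsMatching.exists_of_disjoint_sets_of_equiv hdisj
      (Equiv.ofInjective f hinj) (fun v => (hfspec v).1)
  refine ⟨M, hmatch, ?_⟩
  rw [hverts, Set.ncard_union_eq hdisj (Set.toFinite _) (Set.toFinite _)]
  have hr : (Set.range f).ncard = S.ncard := by
    rw [← Set.image_univ, Set.ncard_image_of_injective _ hinj, Set.ncard_univ,
      Nat.card_coe_set_eq]
  omega

end TreeAux

/-- any tree realizing the level/degree structure of `T_{m,n}`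
(vertices at even distances `0,2,…,m-3` from the root have degree `n-1`,
vertices at odd distances `1,3,…,m-4` have degree `2`, vertices at distance
`m-2` are leaves, and all vertices are within distance `m-2`) has deficiency
`(n-1)(n-2)^{(m-3)/2} - 1`. -/
theorem stmt_5 {V : Type*} [Fintype V] (G : SimpleGraph V) (m n : ℕ)
    (hm : 5 ≤ m) (hmodd : Odd m) (hn : 3 < n)
    (htree : G.IsTree) (r : V)
    (hheight : ∀ v, G.dist r v ≤ m - 2)
    (hdeg_even : ∀ v, G.dist r v ≤ m - 3 → Even (G.dist r v) →
      (G.neighborSet v).ncard = n - 1)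
    (hdeg_odd : ∀ v, G.dist r v ≤ m - 4 → Odd (G.dist r v) →
      (G.neighborSet v).ncard = 2)
    (hdeg_leaf : ∀ v, G.dist r v = m - 2 → (G.neighborSet v).ncard = 1) :
    deficiency G = (n - 1) * (n - 2) ^ ((m - 3) / 2) - 1 := by
  classical
  obtain ⟨t, htm⟩ := hmodd
  set D : ℕ := (m - 5) / 2 with hD
  have hmD : m = 2 * D + 5 := by omega
  set L : ℕ → Finset V := fun d => Finset.univ.filter (fun v => G.dist r v = d) with hL
  have hmemL : ∀ d v, v ∈ L d ↔ G.dist r v = d := by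
    intro d v
    rw [hL]
    simp
  -- kids cardinalities
  have hk0 : ∀ v ∈ L 0, (kids G r v).card = n - 1 := by
    intro v hv
    rw [hmemL] at hv
    rw [kids_card_root htree r v hv]
    exact hdeg_even v (by omega) (by rw [hv]; exact Even.zero)
  have hkeven : ∀ d, Even d → 2 ≤ d → d ≤ m - 3 → ∀ v ∈ L d, (kids G r v).card = n - 2 := by
    intro d hde hd2 hd3 v hv
    rw [hmemL] at hv
    have h1 := kids_card_nonroot htree r v (by omega)
    rw [hdeg_even v (by omega) (by rw [hv]; exact hde)] at h1
    omega
  have hkodd : ∀ d, ¬ Even d → d ≤ m - 4 → ∀ v ∈ L d, (kids G r v).card = 1 := by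
    intro d hde hd4 v hv
    rw [hmemL] at hv
    have hd1 : d % 2 = 1 := Nat.odd_iff.mp (Nat.not_even_iff_odd.mp hde)
    have h1 := kids_card_nonroot htree r v (by omega)
    rw [hdeg_odd v (by omega) (by rw [hv]; exact Nat.not_even_iff_odd.mp hde)] at h1
    omega
  -- level recurrence with constant kid count
  have hstep : ∀ d c, (∀ v ∈ L d, (kids G r v).card = c) →
      (L (d + 1)).card = (L d).card * c := by
    intro d c hc
    have := level_card_succ htree r d
    rw [hL]
    rw [this, Finset.sum_congr rfl hc, Finset.sum_const, smul_eq_mul]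
  have hL0 : (L 0).card = 1 := by
    have : L 0 = {r} := by
      ext v
      rw [hmemL, Finset.mem_singleton]
      constructor
      · intro h
        exact ((htree.isConnected.1 r v).dist_eq_zero_iff.mp h).symm
      · rintro rfl
        exact SimpleGraph.dist_self
    rw [this, Finset.card_singleton]
  -- closed form for odd levels
  have hA : ∀ k, k ≤ D + 1 → (L (2 * k + 1)).card = (n - 1) * (n - 2) ^ k := by
    intro k
    induction k with
    | zero =>
      intro _
      have := hstep 0 (n - 1) hk0
      simpa [hL0] using this
    | succ k ih =>
      intro hk
      have hodd : (L (2 * k + 2)).card = (L (2 * k + 1)).card := by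
        have := hstep (2 * k + 1) 1 (hkodd (2 * k + 1) (Nat.not_even_iff_odd.mpr (Nat.odd_iff.mpr (by omega))) (by omega))
        simpa using this
      have heven : (L (2 * k + 3)).card = (L (2 * k + 2)).card * (n - 2) := by
        have := hstep (2 * k + 2) (n - 2)
          (hkeven (2 * k + 2) ⟨k + 1, by ring⟩ (by omega) (by omega))
        exact this
      have := ih (by omega)
      have hgoal : (L (2 * (k + 1) + 1)).card = (L (2 * k + 1)).card * (n - 2) := by
        have h23 : 2 * (k + 1) + 1 = 2 * k + 3 := by ring
        rw [h23, heven, hodd]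
      rw [hgoal, this, pow_succ]
      ring
  have hB : ∀ k, k ≤ D → (L (2 * (k + 1))).card = (n - 1) * (n - 2) ^ k := by
    intro k hk
    have hodd : (L (2 * k + 2)).card = (L (2 * k + 1)).card := by
      have := hstep (2 * k + 1) 1 (hkodd (2 * k + 1) (Nat.not_even_iff_odd.mpr (Nat.odd_iff.mpr (by omega))) (by omega))
      simpa using this
    have h1 : 2 * (k + 1) = 2 * k + 2 := by ring
    rw [h1, hodd, hA k (by omega)]
  -- the even/odd vertex sets
  set Sf : Finset V := Finset.univ.filter (fun v => Even (G.dist r v)) with hSf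
  set Tf : Finset V := Finset.univ.filter (fun v => ¬ Even (G.dist r v)) with hTf
  have hLdisj : ∀ d1 d2 : ℕ, d1 ≠ d2 → Disjoint (L d1) (L d2) := by
    intro d1 d2 hne
    rw [Finset.disjoint_left]
    intro v h1 h2
    rw [hmemL] at h1 h2
    omega
  have hSfcard : Sf.card = ∑ k ∈ Finset.range (D + 2), (L (2 * k)).card := by
    have hset : Sf = (Finset.range (D + 2)).biUnion (fun k => L (2 * k)) := by
      ext v
      rw [hSf]
      simp only [Finset.mem_filter, Finset.mem_univ, true_and, Finset.mem_biUnion,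
        Finset.mem_range]
      constructor
      · intro hv
        obtain ⟨k, hk⟩ := hv
        refine ⟨k, ?_, ?_⟩
        · have := hheight v
          omega
        · exact (hmemL _ v).mpr (by omega)
      · rintro ⟨k, -, hk⟩
        have hk' : G.dist r v = 2 * k := (hmemL _ v).mp hk
        exact ⟨k, by omega⟩
    rw [hset]
    exact Finset.card_biUnion (fun k1 _ k2 _ hne => hLdisj _ _ (by omega))
  have hTfcard : Tf.card = ∑ k ∈ Finset.range (D + 2), (L (2 * k + 1)).card := by
    have hset : Tf = (Finset.range (D + 2)).biUnion (fun k => L (2 * k + 1)) := by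
      ext v
      rw [hTf]
      simp only [Finset.mem_filter, Finset.mem_univ, true_and, Finset.mem_biUnion,
        Finset.mem_range]
      constructor
      · intro hv
        rw [Nat.not_even_iff_odd] at hv
        obtain ⟨k, hk⟩ := hv
        refine ⟨k, ?_, ?_⟩
        · have := hheight v
          omega
        · exact (hmemL _ v).mpr (by omega)
      · rintro ⟨k, -, hk⟩
        have hk' : G.dist r v = 2 * k + 1 := (hmemL _ v).mp hk
        rw [Nat.even_iff]
        omega
    rw [hset]
    exact Finset.card_biUnion (fun k1 _ k2 _ hne => hLdisj _ _ (by omega))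
  -- evaluate the sums
  have hTval : Tf.card = (n - 1) * ∑ k ∈ Finset.range (D + 2), (n - 2) ^ k := by
    rw [hTfcard, Finset.mul_sum]
    exact Finset.sum_congr rfl fun k hk => hA k (by
      rw [Finset.mem_range] at hk
      omega)
  have hSval : Sf.card = 1 + (n - 1) * ∑ k ∈ Finset.range (D + 1), (n - 2) ^ k := by
    rw [hSfcard, Finset.sum_range_succ', Finset.mul_sum]
    have h0 : (L (2 * 0)).card = 1 := hL0
    rw [h0, add_comm]
    congr 1
    refine Finset.sum_congr rfl fun k hk => ?_
    rw [Finset.mem_range] at hk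
    have hb := hB k (by omega)
    have harg : 2 * (k + 1) = 2 * k + 2 := by ring
    rw [harg] at hb
    have harg2 : 2 * (k + 1) = 2 * k + 2 := by ring
    calc (L (2 * (k + 1))).card = (L (2 * k + 2)).card := by rw [harg2]
      _ = (n - 1) * (n - 2) ^ k := hb
  -- the set of even vertices as a Set
  have hSncard : {v | Even (G.dist r v)}.ncard = Sf.card := by
    rw [← Set.ncard_coe_finset]
    congr 1
    ext v
    rw [hSf]
    simp
  -- every even vertex has a child
  have hkidsex : ∀ v : V, Even (G.dist r v) →
      ∃ w, G.Adj v w ∧ G.dist r w = G.dist r v + 1 := by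
    intro v hv
    have hle : G.dist r v ≤ m - 3 := by
      have := hheight v
      obtain ⟨j, hj⟩ := hv
      omega
    have hpos : 0 < (kids G r v).card := by
      rcases Nat.eq_zero_or_pos (G.dist r v) with h0 | h0
      · rw [hk0 v (by rw [hmemL]; exact h0)]
        omega
      · have h2 : 2 ≤ G.dist r v := by
          obtain ⟨j, hj⟩ := hv
          omega
        rw [hkeven (G.dist r v) hv h2 hle v (by rw [hmemL])]
        omega
    obtain ⟨w, hw⟩ := Finset.card_pos.mp hpos
    rw [mem_kids] at hw
    exact ⟨w, hw⟩
  -- compute the supremum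
  have hgreat : IsGreatest {k | ∃ M : G.Subgraph, M.IsMatching ∧ M.verts.ncard = k}
      (2 * Sf.card) := by
    constructor
    · obtain ⟨M, hM, hMcard⟩ := matching_exists htree r hkidsex
      exact ⟨M, hM, by rw [hMcard, hSncard]⟩
    · rintro k ⟨M, hM, rfl⟩
      have := matching_verts_le htree r M hM
      rw [hSncard] at this
      exact this
  have hcardV : Nat.card V = Sf.card + Tf.card := by
    rw [Nat.card_eq_fintype_card, ← Finset.card_univ,
      ← Finset.card_filter_add_card_filter_not (p := fun v => Even (G.dist r v))
        (s := (Finset.univ : Finset V))]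
  -- final arithmetic
  rw [deficiency, hgreat.csSup_eq, hcardV]
  have hexp : (m - 3) / 2 = D + 1 := by omega
  rw [hexp]
  have hsplit : ∑ k ∈ Finset.range (D + 2), (n - 2) ^ k
      = (∑ k ∈ Finset.range (D + 1), (n - 2) ^ k) + (n - 2) ^ (D + 1) :=
    Finset.sum_range_succ _ _
  have hmul : (n - 1) * ((∑ k ∈ Finset.range (D + 1), (n - 2) ^ k) + (n - 2) ^ (D + 1))
      = (n - 1) * (∑ k ∈ Finset.range (D + 1), (n - 2) ^ k) + (n - 1) * (n - 2) ^ (D + 1) := by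
    ring
  have hpos : 1 ≤ (n - 1) * (n - 2) ^ (D + 1) := by
    have h1 : 0 < n - 1 := by omega
    have h2 : 0 < (n - 2) ^ (D + 1) := pow_pos (by omega) _
    exact Nat.one_le_iff_ne_zero.mpr (Nat.mul_ne_zero (by omega) (by omega))
  rw [hTval, hSval, hsplit, hmul]
  omega
end

section
/- Let G be a connected graph with levelling L_0 = {x_0}, L_1, ..., L_N from x_0, where x_0 has two neighbors x_0^+, x_0^- with N(x_0^+) = N(x_0^-) = {x_0}. If for some i ≥ 2 there exist a vertex u ∈ L_{i-1} and two nonadjacent vertices v, w ∈ N(u) ∩ L_i, then G contains an induced copy of the bone B_i (the tree obtained from a path on i vertices by attaching two pendent edges at each endpoint). -/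
open SimpleGraph

/-- The bone `B_i`: the tree obtained from a path on `i` vertices by attaching two
pendent edges at each endpoint (the case `n = 2` of `BS_n^p`). -/
def boneGraph (i : ℕ) : SimpleGraph (Fin i ⊕ (Fin 2 ⊕ Fin 2)) :=
  SimpleGraph.fromRel (fun a b =>
    match a, b with
    | Sum.inl a', Sum.inl b' => (a' : ℕ) + 1 = (b' : ℕ)
    | Sum.inl a', Sum.inr (Sum.inl _) => (a' : ℕ) = 0
    | Sum.inl a', Sum.inr (Sum.inr _) => (a' : ℕ) = i - 1
    | _, _ => False)

lemma dist_getVert_le {V : Type*} (G : SimpleGraph V) (hc : G.Connected) {x y : V}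
    (p : G.Walk x y) : ∀ k, G.dist x (p.getVert k) ≤ k := by
  intro k
  induction k with
  | zero => simp [Walk.getVert_zero]
  | succ k ih =>
    by_cases h : k < p.length
    · have hadj := p.adj_getVert_succ h
      calc G.dist x (p.getVert (k+1))
          ≤ G.dist x (p.getVert k) + G.dist (p.getVert k) (p.getVert (k+1)) :=
            hc.dist_triangle
        _ ≤ k + 1 := by
            have : G.dist (p.getVert k) (p.getVert (k+1)) = 1 := dist_eq_one_iff_adj.mpr hadj
            omega
    · rw [p.getVert_of_length_le (by omega), ← p.getVert_of_length_le (le_of_not_gt h)]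
      omega

lemma dist_getVert_eq {V : Type*} (G : SimpleGraph V) (hc : G.Connected) {x y : V}
    (p : G.Walk x y) (hp : p.length = G.dist x y) {k : ℕ} (hk : k ≤ p.length) :
    G.dist x (p.getVert k) = k := by
  have h1 := dist_getVert_le G hc p k
  have h2 : G.dist (p.getVert k) y ≤ p.length - k := by
    have := dist_getVert_le G hc p.reverse (p.length - k)
    rw [p.getVert_reverse] at this
    have hkk : p.length - (p.length - k) = k := by omega
    rw [hkk] at this
    rwa [dist_comm]
  have h3 : G.dist x y ≤ G.dist x (p.getVert k) + G.dist (p.getVert k) y := hc.dist_triangle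
  omega

/-- in a connected graph levelled from a vertex `x₀` having two pendent
neighbors, a vertex `u ∈ L_{i-1}` with two nonadjacent neighbors `v, w ∈ L_i`
produces an induced copy of the bone `B_i`. -/
theorem stmt_10 {V : Type*} [Fintype V] (G : SimpleGraph V) (hconn : G.Connected)
    (x₀ x₀p x₀m : V)
    (h0p : G.neighborSet x₀p = {x₀}) (h0m : G.neighborSet x₀m = {x₀}) (h0 : x₀p ≠ x₀m)
    (i : ℕ) (hi : 2 ≤ i) (u v w : V)
    (hu : G.dist x₀ u = i - 1) (hv : G.dist x₀ v = i) (hw : G.dist x₀ w = i)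
    (huv : G.Adj u v) (huw : G.Adj u w) (hvw : v ≠ w) (hnadj : ¬ G.Adj v w) :
    Nonempty (boneGraph i ↪g G) := by
  classical
  obtain ⟨p, hp⟩ := (hconn x₀ u).exists_walk_length_eq_dist
  have hplen : p.length = i - 1 := by rw [hp, hu]
  set P : ℕ → V := fun k => p.getVert k with hPdef
  -- distances along the path
  have hPd : ∀ k, k ≤ i - 1 → G.dist x₀ (P k) = k := fun k hk =>
    dist_getVert_eq G hconn p hp (by omega)
  have hP0 : P 0 = x₀ := p.getVert_zero
  have hPn : P (i-1) = u := by
    have := p.getVert_length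
    rw [hplen] at this
    exact this
  have hPadj : ∀ k, k < i - 1 → G.Adj (P k) (P (k+1)) := fun k hk =>
    p.adj_getVert_succ (by omega)
  -- neighbors of pendent vertices
  have hNp : ∀ z, G.Adj x₀p z → z = x₀ := by
    intro z hz
    have : z ∈ G.neighborSet x₀p := hz
    rwa [h0p, Set.mem_singleton_iff] at this
  have hNm : ∀ z, G.Adj x₀m z → z = x₀ := by
    intro z hz
    have : z ∈ G.neighborSet x₀m := hz
    rwa [h0m, Set.mem_singleton_iff] at this
  have hx0p : G.Adj x₀ x₀p := by
    have : x₀ ∈ G.neighborSet x₀p := by rw [h0p]; rfl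
    exact this.symm
  have hx0m : G.Adj x₀ x₀m := by
    have : x₀ ∈ G.neighborSet x₀m := by rw [h0m]; rfl
    exact this.symm
  have hdx0 : G.dist x₀ x₀ = 0 := dist_self
  have hdp : G.dist x₀ x₀p = 1 := dist_eq_one_iff_adj.mpr hx0p
  have hdm : G.dist x₀ x₀m = 1 := dist_eq_one_iff_adj.mpr hx0m
  -- adjacency characterizations
  have adjdist : ∀ a b : V, G.Adj a b → G.dist x₀ b ≤ G.dist x₀ a + 1 := by
    intro a b hab
    have h1 : G.dist x₀ b ≤ G.dist x₀ a + G.dist a b := hconn.dist_triangle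
    have h2 : G.dist a b = 1 := dist_eq_one_iff_adj.mpr hab
    omega
  have hPP : ∀ j k : ℕ, j ≤ i-1 → k ≤ i-1 →
      (G.Adj (P j) (P k) ↔ (j + 1 = k ∨ k + 1 = j)) := by
    intro j k hj hk
    constructor
    · intro hadj
      have h1 := adjdist _ _ hadj
      have h2 := adjdist _ _ hadj.symm
      rw [hPd j hj, hPd k hk] at h1 h2
      have hne : j ≠ k := by
        intro h; rw [h] at hadj; exact G.irrefl hadj
      omega
    · rintro (h | h)
      · rw [← h]; exact hPadj j (by omega)
      · rw [← h]; exact (hPadj k (by omega)).symm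
  have hPv : ∀ k : ℕ, k ≤ i-1 → (G.Adj (P k) v ↔ k = i - 1) := by
    intro k hk
    constructor
    · intro hadj
      have h1 := adjdist _ _ hadj
      rw [hPd k hk, hv] at h1
      omega
    · intro h; rw [h, hPn]; exact huv
  have hPw : ∀ k : ℕ, k ≤ i-1 → (G.Adj (P k) w ↔ k = i - 1) := by
    intro k hk
    constructor
    · intro hadj
      have h1 := adjdist _ _ hadj
      rw [hPd k hk, hw] at h1
      omega
    · intro h; rw [h, hPn]; exact huw
  have hPp : ∀ k : ℕ, k ≤ i-1 → (G.Adj (P k) x₀p ↔ k = 0) := by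
    intro k hk
    constructor
    · intro hadj
      have := hNp _ hadj.symm
      have h1 : G.dist x₀ (P k) = 0 := by rw [this]; exact hdx0
      rw [hPd k hk] at h1; exact h1
    · intro h; rw [h, hP0]; exact hx0p
  have hPm : ∀ k : ℕ, k ≤ i-1 → (G.Adj (P k) x₀m ↔ k = 0) := by
    intro k hk
    constructor
    · intro hadj
      have := hNm _ hadj.symm
      have h1 : G.dist x₀ (P k) = 0 := by rw [this]; exact hdx0
      rw [hPd k hk] at h1; exact h1
    · intro h; rw [h, hP0]; exact hx0m
  -- vertex distinctness
  have hPne_p : ∀ k : ℕ, k ≤ i-1 → P k ≠ x₀p := by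
    intro k hk heq
    by_cases h : k < i - 1
    · have := hNp _ (heq ▸ hPadj k h)
      have h1 := hPd (k+1) (by omega)
      rw [this, hdx0] at h1
      omega
    · have hk' : k = i - 1 := by omega
      have : u = x₀p := by rw [← hPn, ← hk', heq]
      have := hNp _ (this ▸ huv)
      rw [this, hdx0] at hv
      omega
  have hPne_m : ∀ k : ℕ, k ≤ i-1 → P k ≠ x₀m := by
    intro k hk heq
    by_cases h : k < i - 1
    · have := hNm _ (heq ▸ hPadj k h)
      have h1 := hPd (k+1) (by omega)
      rw [this, hdx0] at h1
      omega
    · have hk' : k = i - 1 := by omega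
      have : u = x₀m := by rw [← hPn, ← hk', heq]
      have := hNm _ (this ▸ huv)
      rw [this, hdx0] at hv
      omega
  have hPne_v : ∀ k : ℕ, k ≤ i-1 → P k ≠ v := by
    intro k hk heq
    have := hPd k hk
    rw [heq, hv] at this
    omega
  have hPne_w : ∀ k : ℕ, k ≤ i-1 → P k ≠ w := by
    intro k hk heq
    have := hPd k hk
    rw [heq, hw] at this
    omega
  have hpv : x₀p ≠ v := fun h => by rw [h, hv] at hdp; omega
  have hpw : x₀p ≠ w := fun h => by rw [h, hw] at hdp; omega
  have hmv : x₀m ≠ v := fun h => by rw [h, hv] at hdm; omega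
  have hmw : x₀m ≠ w := fun h => by rw [h, hw] at hdm; omega
  -- leaf non-adjacencies
  have hnpm : ¬ G.Adj x₀p x₀m := by
    intro h
    have := hNp _ h
    exact G.irrefl (this ▸ hx0m)
  have hnpv : ¬ G.Adj x₀p v := by
    intro h
    have := hNp _ h
    rw [this, hdx0] at hv; omega
  have hnpw : ¬ G.Adj x₀p w := by
    intro h
    have := hNp _ h
    rw [this, hdx0] at hw; omega
  have hnmv : ¬ G.Adj x₀m v := by
    intro h
    have := hNm _ h
    rw [this, hdx0] at hv; omega
  have hnmw : ¬ G.Adj x₀m w := by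
    intro h
    have := hNm _ h
    rw [this, hdx0] at hw; omega
  -- the map
  refine ⟨⟨⟨fun a => match a with
    | Sum.inl k => P (k : ℕ)
    | Sum.inr (Sum.inl j) => ![x₀p, x₀m] j
    | Sum.inr (Sum.inr j) => ![v, w] j, ?_⟩, ?_⟩⟩
  · -- injectivity
    intro x y hab
    rcases x with a | (j | j) <;> rcases y with b | (j' | j') <;> simp only at hab
    · -- path-path
      have h1 := hPd a (by omega)
      have h2 := hPd b (by omega)
      rw [hab, h2] at h1
      exact congrArg Sum.inl (Fin.ext h1.symm)
    · exfalso
      fin_cases j' <;>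
        simp only [Fin.mk_zero, Fin.mk_one, Fin.isValue, Matrix.cons_val_zero,
          Matrix.cons_val_one, Matrix.head_cons] at hab <;>
      first
        | exact hPne_p a (by omega) hab
        | exact hPne_m a (by omega) hab
    · exfalso
      fin_cases j' <;>
        simp only [Fin.mk_zero, Fin.mk_one, Fin.isValue, Matrix.cons_val_zero,
          Matrix.cons_val_one, Matrix.head_cons] at hab <;>
      first
        | exact hPne_v a (by omega) hab
        | exact hPne_w a (by omega) hab
    · exfalso
      fin_cases j <;>
        simp only [Fin.mk_zero, Fin.mk_one, Fin.isValue, Matrix.cons_val_zero,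
          Matrix.cons_val_one, Matrix.head_cons] at hab <;>
      first
        | exact hPne_p b (by omega) hab.symm
        | exact hPne_m b (by omega) hab.symm
    · fin_cases j <;> fin_cases j' <;>
        simp only [Fin.mk_zero, Fin.mk_one, Fin.isValue, Matrix.cons_val_zero,
          Matrix.cons_val_one, Matrix.head_cons] at hab <;>
      first
        | rfl
        | exact absurd hab h0
        | exact absurd hab.symm h0
    · exfalso
      fin_cases j <;> fin_cases j' <;>
        simp only [Fin.mk_zero, Fin.mk_one, Fin.isValue, Matrix.cons_val_zero,
          Matrix.cons_val_one, Matrix.head_cons] at hab <;>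
      first
        | exact hpv hab | exact hpw hab | exact hmv hab | exact hmw hab
        | exact hpv hab.symm | exact hpw hab.symm
        | exact hmv hab.symm | exact hmw hab.symm
    · exfalso
      fin_cases j <;>
        simp only [Fin.mk_zero, Fin.mk_one, Fin.isValue, Matrix.cons_val_zero,
          Matrix.cons_val_one, Matrix.head_cons] at hab <;>
      first
        | exact hPne_v b (by omega) hab.symm
        | exact hPne_w b (by omega) hab.symm
    · exfalso
      fin_cases j <;> fin_cases j' <;>
        simp only [Fin.mk_zero, Fin.mk_one, Fin.isValue, Matrix.cons_val_zero,
          Matrix.cons_val_one, Matrix.head_cons] at hab <;>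
      first
        | exact hpv hab | exact hpw hab | exact hmv hab | exact hmw hab
        | exact hpv hab.symm | exact hpw hab.symm
        | exact hmv hab.symm | exact hmw hab.symm
    · fin_cases j <;> fin_cases j' <;>
        simp only [Fin.mk_zero, Fin.mk_one, Fin.isValue, Matrix.cons_val_zero,
          Matrix.cons_val_one, Matrix.head_cons] at hab <;>
      first
        | rfl
        | exact absurd hab hvw
        | exact absurd hab.symm hvw
  · -- map_rel_iff
    intro x y
    rcases x with a | (j | j) <;> rcases y with b | (j' | j') <;>
      simp only [boneGraph, fromRel_adj, ne_eq, Sum.inl.injEq, Sum.inr.injEq]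
    · -- path-path
      show G.Adj (P a) (P b) ↔ _
      rw [hPP a b (by omega) (by omega)]
      constructor
      · intro h
        refine ⟨fun he => ?_, h⟩
        rw [he] at h
        omega
      · exact fun h => h.2
    · -- path vs x₀p/x₀m
      show G.Adj (P a) (![x₀p, x₀m] j') ↔ _
      fin_cases j' <;>
        simp only [Fin.mk_zero, Fin.mk_one, Fin.isValue, Matrix.cons_val_zero,
          Matrix.cons_val_one, Matrix.head_cons]
      · rw [hPp a (by omega)]; simp
      · rw [hPm a (by omega)]; simp
    · -- path vs v/w
      show G.Adj (P a) (![v, w] j') ↔ _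
      fin_cases j' <;>
        simp only [Fin.mk_zero, Fin.mk_one, Fin.isValue, Matrix.cons_val_zero,
          Matrix.cons_val_one, Matrix.head_cons]
      · rw [hPv a (by omega)]; simp
      · rw [hPw a (by omega)]; simp
    · -- x₀p/x₀m vs path
      show G.Adj (![x₀p, x₀m] j) (P b) ↔ _
      fin_cases j <;>
        simp only [Fin.mk_zero, Fin.mk_one, Fin.isValue, Matrix.cons_val_zero,
          Matrix.cons_val_one, Matrix.head_cons]
      · rw [adj_comm, hPp b (by omega)]; simp
      · rw [adj_comm, hPm b (by omega)]; simp
    · -- x₀p/x₀m vs x₀p/x₀m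
      show G.Adj (![x₀p, x₀m] j) (![x₀p, x₀m] j') ↔ _
      constructor
      · intro h
        exfalso
        fin_cases j <;> fin_cases j' <;>
          simp only [Fin.mk_zero, Fin.mk_one, Fin.isValue, Matrix.cons_val_zero,
            Matrix.cons_val_one, Matrix.head_cons] at h <;>
        first
          | exact G.irrefl h
          | exact hnpm h
          | exact hnpm h.symm
      · simp
    · -- x₀p/x₀m vs v/w
      show G.Adj (![x₀p, x₀m] j) (![v, w] j') ↔ _
      constructor
      · intro h
        exfalso
        fin_cases j <;> fin_cases j' <;>
          simp only [Fin.mk_zero, Fin.mk_one, Fin.isValue, Matrix.cons_val_zero,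
            Matrix.cons_val_one, Matrix.head_cons] at h <;>
        first
          | exact hnpv h | exact hnpw h | exact hnmv h | exact hnmw h
      · simp
    · -- v/w vs path
      show G.Adj (![v, w] j) (P b) ↔ _
      fin_cases j <;>
        simp only [Fin.mk_zero, Fin.mk_one, Fin.isValue, Matrix.cons_val_zero,
          Matrix.cons_val_one, Matrix.head_cons]
      · rw [adj_comm, hPv b (by omega)]; simp
      · rw [adj_comm, hPw b (by omega)]; simp
    · -- v/w vs x₀p/x₀m
      show G.Adj (![v, w] j) (![x₀p, x₀m] j') ↔ _
      constructor
      · intro h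
        exfalso
        fin_cases j <;> fin_cases j' <;>
          simp only [Fin.mk_zero, Fin.mk_one, Fin.isValue, Matrix.cons_val_zero,
            Matrix.cons_val_one, Matrix.head_cons] at h <;>
        first
          | exact hnpv h.symm | exact hnpw h.symm
          | exact hnmv h.symm | exact hnmw h.symm
      · simp
    · -- v/w vs v/w
      show G.Adj (![v, w] j) (![v, w] j') ↔ _
      constructor
      · intro h
        exfalso
        fin_cases j <;> fin_cases j' <;>
          simp only [Fin.mk_zero, Fin.mk_one, Fin.isValue, Matrix.cons_val_zero,
            Matrix.cons_val_one, Matrix.head_cons] at h <;>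
        first
          | exact G.irrefl h
          | exact hnadj h
          | exact hnadj h.symm
      · simp
end

section
/- A connected graph G with α_l(G) < 3 (i.e., claw-free) satisfies def(G) ≤ 1; equivalently, every connected claw-free graph has a matching missing at most one vertex. -/
open SimpleGraph

section Aux
variable {V : Type*} {G : SimpleGraph V}

/-- Deleting both endpoints of an edge of a matching yields a matching. -/
lemma matching_deleteVerts_pair {M : G.Subgraph} (hM : M.IsMatching) {x y : V}
    (hxy : M.Adj x y) : (M.deleteVerts {x, y}).IsMatching := by
  intro v hv
  rw [Subgraph.deleteVerts_verts, Set.mem_diff] at hv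
  obtain ⟨hvM, hvxy⟩ := hv
  obtain ⟨u, hu, huniq⟩ := hM hvM
  have hne : u ∉ ({x, y} : Set V) := by
    rintro (rfl | rfl)
    · obtain ⟨w', hw', huniq'⟩ := hM (M.edge_vert hxy)
      have : v = y := (huniq' v hu.symm).trans (huniq' y hxy).symm
      exact hvxy (by simp [this])
    · obtain ⟨w', hw', huniq'⟩ := hM (M.edge_vert hxy.symm)
      have : v = x := (huniq' v hu.symm).trans (huniq' x hxy.symm).symm
      exact hvxy (by simp [this])
  refine ⟨u, ?_, fun z hz => huniq z ?_⟩
  · exact (Subgraph.deleteVerts_adj).mpr ⟨hvM, hvxy, M.edge_vert hu.symm, hne, hu⟩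
  · exact ((Subgraph.deleteVerts_adj).mp hz).2.2.2.2
end Aux

section Aux2
variable {V : Type*} [Fintype V] {G : SimpleGraph V}

/-- Extending a matching by an edge between two exposed vertices. -/
lemma matching_extend {M : G.Subgraph} (hM : M.IsMatching) {a c : V} (hac : G.Adj a c)
    (ha : a ∉ M.verts) (hc : c ∉ M.verts) :
    ∃ M' : G.Subgraph, M'.IsMatching ∧ M'.verts.ncard = M.verts.ncard + 2 := by
  refine ⟨M ⊔ G.subgraphOfAdj hac, hM.sup (Subgraph.IsMatching.subgraphOfAdj hac) ?_, ?_⟩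
  · rw [hM.support_eq_verts, (Subgraph.IsMatching.subgraphOfAdj hac).support_eq_verts,
      subgraphOfAdj_verts]
    rw [Set.disjoint_right]
    rintro x (rfl | rfl) <;> assumption
  · rw [Subgraph.verts_sup, subgraphOfAdj_verts,
      Set.ncard_union_eq (by rw [Set.disjoint_right]; rintro x (rfl | rfl) <;> assumption)
        (Set.toFinite _) (Set.toFinite _), Set.ncard_pair hac.ne]

/-- Swapping a matched edge `xy` for a new edge `ax` with `a` exposed. -/
lemma matching_swap {M : G.Subgraph} (hM : M.IsMatching) {x y a : V}
    (hxy : M.Adj x y) (ha : a ∉ M.verts) (hax : G.Adj a x) :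
    ∃ M' : G.Subgraph, M'.IsMatching ∧ M'.verts = (M.verts \ {x, y}) ∪ {a, x} ∧
      M'.verts.ncard = M.verts.ncard := by
  have hxM : x ∈ M.verts := M.edge_vert hxy
  have hyM : y ∈ M.verts := M.edge_vert hxy.symm
  have hxyne : x ≠ y := (M.adj_sub hxy).ne
  have hdisj : Disjoint (M.verts \ {x, y}) ({a, x} : Set V) := by
    rw [Set.disjoint_right]
    rintro z (rfl | rfl)
    · exact fun hz => ha hz.1
    · exact fun hz => hz.2 (Or.inl rfl)
  refine ⟨M.deleteVerts {x, y} ⊔ G.subgraphOfAdj hax,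
    (matching_deleteVerts_pair hM hxy).sup (Subgraph.IsMatching.subgraphOfAdj hax) ?_, ?_, ?_⟩
  · rw [(matching_deleteVerts_pair hM hxy).support_eq_verts,
      (Subgraph.IsMatching.subgraphOfAdj hax).support_eq_verts,
      subgraphOfAdj_verts, Subgraph.deleteVerts_verts]
    exact hdisj
  · rw [Subgraph.verts_sup, Subgraph.deleteVerts_verts, subgraphOfAdj_verts]
  · rw [Subgraph.verts_sup, Subgraph.deleteVerts_verts, subgraphOfAdj_verts,
      Set.ncard_union_eq hdisj (Set.toFinite _) (Set.toFinite _),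
      Set.ncard_pair hax.ne, Set.ncard_diff (by rintro z (rfl | rfl) <;> assumption)
        (Set.toFinite _), Set.ncard_pair hxyne]
    have h2 : 2 ≤ M.verts.ncard := by
      have : ({x, y} : Set V).ncard ≤ M.verts.ncard :=
        Set.ncard_le_ncard (by rintro z (rfl | rfl) <;> assumption) (Set.toFinite _)
      rwa [Set.ncard_pair hxyne] at this
    omega
end Aux2

section Aux3
variable {V : Type*} [Fintype V] {G : SimpleGraph V}

lemma augment (hclawfree : ∀ (u : V) (S : Set V), S ⊆ G.neighborSet u →
      S.Pairwise (fun a b => ¬ G.Adj a b) → S.ncard < 3) (k : ℕ) :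
    ∀ (M : G.Subgraph), M.IsMatching → ∀ a b : V, a ∉ M.verts → b ∉ M.verts → a ≠ b →
      ∀ p : G.Walk a b, p.length ≤ k →
      ∃ M' : G.Subgraph, M'.IsMatching ∧ M'.verts.ncard = M.verts.ncard + 2 := by
  induction k with
  | zero =>
    intro M hM a b ha hb hab p hp
    exact absurd (Walk.eq_of_length_eq_zero (Nat.le_zero.mp hp)) hab
  | succ k IH =>
    intro M hM a b ha hb hab p hp
    cases p with
    | nil => exact absurd rfl hab
    | @cons _ v1 _ h q =>
      rw [Walk.length_cons] at hp
      by_cases hv1M : v1 ∈ M.verts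
      · -- v1 is matched
        cases q with
        | nil => exact absurd hv1M hb
        | @cons _ v2 _ h2 q2 =>
          rw [Walk.length_cons] at hp
          by_cases hav2 : a = v2
          · subst hav2
            exact IH M hM a b ha hb hab q2 (by omega)
          by_cases hadj : G.Adj a v2
          · exact IH M hM a b ha hb hab (Walk.cons hadj q2) (by rw [Walk.length_cons]; omega)
          obtain ⟨w, hw, -⟩ := hM hv1M
          have hwa : w ≠ a := fun hh => ha (hh ▸ M.edge_vert hw.symm)
          have hwb : w ≠ b := fun hh => hb (hh ▸ M.edge_vert hw.symm)
          have hwv1 : w ≠ v1 := (M.adj_sub hw).ne'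
          have hbv1 : b ≠ v1 := fun hh => hb (hh ▸ hv1M)
          by_cases hwv2 : w = v2 ∨ G.Adj w v2
          · obtain ⟨M', hM', hverts, hcard⟩ := matching_swap hM hw ha h
            have hw' : w ∉ M'.verts := by
              rw [hverts]
              rintro ((⟨-, hz⟩) | (rfl | rfl))
              · exact hz (Or.inr rfl)
              · exact hwa rfl
              · exact hwv1 rfl
            have hb' : b ∉ M'.verts := by
              rw [hverts]
              rintro ((⟨hz, -⟩) | (rfl | rfl))
              · exact hb hz
              · exact hab rfl
              · exact hbv1 rfl
            rcases hwv2 with rfl | hwadj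
            · obtain ⟨M'', hM'', hc⟩ := IH M' hM' w b hw' hb' hwb q2 (by omega)
              exact ⟨M'', hM'', by omega⟩
            · obtain ⟨M'', hM'', hc⟩ := IH M' hM' w b hw' hb' hwb (Walk.cons hwadj q2)
                (by rw [Walk.length_cons]; omega)
              exact ⟨M'', hM'', by omega⟩
          by_cases hwadja : G.Adj w a
          · obtain ⟨M', hM', hverts, hcard⟩ := matching_swap hM hw.symm ha hwadja.symm
            have hv1' : v1 ∉ M'.verts := by
              rw [hverts]
              rintro ((⟨-, hz⟩) | (rfl | rfl))
              · exact hz (Or.inr rfl)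
              · exact h.ne rfl
              · exact hwv1 rfl
            have hb' : b ∉ M'.verts := by
              rw [hverts]
              rintro ((⟨hz, -⟩) | (rfl | rfl))
              · exact hb hz
              · exact hab rfl
              · exact hwb rfl
            obtain ⟨M'', hM'', hc⟩ := IH M' hM' v1 b hv1' hb' (Ne.symm hbv1)
              (Walk.cons h2 q2) (by rw [Walk.length_cons]; omega)
            exact ⟨M'', hM'', by omega⟩
          · -- claw at v1
            exfalso
            push_neg at hwv2
            have hv2w : v2 ≠ w := Ne.symm hwv2.1
            have haw : a ≠ w := Ne.symm hwa
            have hsub : ({a, v2, w} : Set V) ⊆ G.neighborSet v1 := by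
              rintro z (rfl | rfl | rfl)
              · exact h.symm
              · exact h2
              · exact M.adj_sub hw
            have hpair : ({a, v2, w} : Set V).Pairwise (fun s t => ¬ G.Adj s t) := by
              rintro s (rfl | rfl | rfl) t (rfl | rfl | rfl) hst
              · exact absurd rfl hst
              · exact hadj
              · exact fun hh => hwadja hh.symm
              · exact fun hh => hadj hh.symm
              · exact absurd rfl hst
              · exact fun hh => hwv2.2 hh.symm
              · exact hwadja
              · exact hwv2.2
              · exact absurd rfl hst
            have h3 : ({a, v2, w} : Set V).ncard = 3 :=
              Set.ncard_eq_three.mpr ⟨a, v2, w, hav2, haw, hv2w, rfl⟩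
            have := hclawfree v1 _ hsub hpair
            omega
      · -- v1 is exposed: extend by edge a v1
        exact matching_extend hM h ha hv1M
end Aux3

/-- every connected claw-free graph (no vertex has an independent
set of size 3 in its neighborhood, i.e. `α_l(G) < 3`) has deficiency at most 1. -/
theorem stmt_12 {V : Type*} [Fintype V] (G : SimpleGraph V) (hconn : G.Connected)
    (hclawfree : ∀ (u : V) (S : Set V), S ⊆ G.neighborSet u →
      S.Pairwise (fun a b => ¬ G.Adj a b) → S.ncard < 3) :
    deficiency G ≤ 1 := by
  rw [deficiency]
  set S : Set ℕ := {n | ∃ M : G.Subgraph, M.IsMatching ∧ M.verts.ncard = n} with hS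
  have hne : S.Nonempty := ⟨0, ⊥, fun v hv => absurd hv (by simp), by simp⟩
  have hbdd : BddAbove S := by
    refine ⟨Nat.card V, fun n hn => ?_⟩
    obtain ⟨M, -, rfl⟩ := hn
    rw [← Set.ncard_univ]
    exact Set.ncard_le_ncard (Set.subset_univ _) (Set.toFinite _)
  obtain ⟨M, hM, hMcard⟩ := Nat.sSup_mem hne hbdd
  by_contra hcon
  push_neg at hcon
  have h2 : 1 < (M.vertsᶜ).ncard := by
    have := Set.ncard_add_ncard_compl M.verts (Set.toFinite _) (Set.toFinite _)
    omega
  obtain ⟨a, b, ha, hb, hab⟩ := (Set.one_lt_ncard_iff (Set.toFinite _)).mp h2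
  obtain ⟨p⟩ := hconn.preconnected a b
  obtain ⟨M', hM', hc⟩ := augment hclawfree p.length M hM a b ha hb hab p le_rfl
  have : M'.verts.ncard ≤ sSup S := le_csSup hbdd ⟨M', hM', rfl⟩
  omega
end

section
/- For every graph G, the deficiency def(G) = |V(G)| − 2ν(G) (where ν is the maximum matching number) has the same parity as |V(G)|; in particular, if G is connected claw-free with an even number of vertices, then G has a perfect matching. -/
open SimpleGraph

universe u

namespace Stmt13Aux

variable {V : Type u}

/-- From the `ncard < 3` claw-free hypothesis, derive that there is no claw. -/
lemma no_claw {G : SimpleGraph V}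
    (hcf : ∀ (u : V) (S : Set V), S ⊆ G.neighborSet u →
      S.Pairwise (fun a b => ¬ G.Adj a b) → S.ncard < 3)
    {u a b c : V} (ha : G.Adj u a) (hb : G.Adj u b) (hc : G.Adj u c)
    (hab : a ≠ b) (hac : a ≠ c) (hbc : b ≠ c)
    (nab : ¬ G.Adj a b) (nac : ¬ G.Adj a c) (nbc : ¬ G.Adj b c) : False := by
  have h3 : ({a, b, c} : Set V).ncard = 3 :=
    Set.ncard_eq_three.mpr ⟨a, b, c, hab, hac, hbc, rfl⟩
  have hlt := hcf u {a, b, c} ?_ ?_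
  · omega
  · intro x hx
    simp only [Set.mem_insert_iff, Set.mem_singleton_iff] at hx
    rcases hx with rfl | rfl | rfl <;> assumption
  · intro x hx y hy hxy
    simp only [Set.mem_insert_iff, Set.mem_singleton_iff] at hx hy
    rcases hx with rfl | rfl | rfl <;> rcases hy with rfl | rfl | rfl <;>
      first
        | exact absurd rfl hxy
        | assumption
        | exact fun h => nab h.symm
        | exact fun h => nac h.symm
        | exact fun h => nbc h.symm

/-- Every vertex at positive distance from `r` has a neighbour strictly closer to `r`,
in fact at distance exactly one less. -/
lemma exists_pred {G : SimpleGraph V} (hconn : G.Connected) {r z : V}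
    (h : G.dist r z ≠ 0) : ∃ y, G.Adj z y ∧ G.dist r y + 1 = G.dist r z := by
  have h' : G.dist z r ≠ 0 := by rwa [SimpleGraph.dist_comm]
  obtain ⟨p, hp⟩ := SimpleGraph.exists_walk_of_dist_ne_zero h'
  have hnil : ¬ p.Nil := by
    rw [SimpleGraph.Walk.nil_iff_length_eq, hp]; exact h'
  refine ⟨p.getVert 1, SimpleGraph.Walk.adj_snd hnil, ?_⟩
  have h1 : p.tail.length + 1 = p.length := SimpleGraph.Walk.length_tail_add_one hnil
  have h2 : G.dist (p.getVert 1) r ≤ p.tail.length := SimpleGraph.dist_le p.tail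
  have h3 : G.dist r z ≤ G.dist r (p.getVert 1) + G.dist (p.getVert 1) z :=
    hconn.dist_triangle
  have h4 : G.dist (p.getVert 1) z = 1 :=
    SimpleGraph.dist_eq_one_iff_adj.mpr (SimpleGraph.Walk.adj_snd hnil).symm
  have h5 : G.dist r (p.getVert 1) = G.dist (p.getVert 1) r := SimpleGraph.dist_comm
  have h6 : G.dist r z = G.dist z r := SimpleGraph.dist_comm
  omega

lemma del_coe_adj {G : SimpleGraph V} {D : Set V}
    (x y : ↥(((⊤ : G.Subgraph).deleteVerts D).verts)) :
    (((⊤ : G.Subgraph).deleteVerts D).coe).Adj x y ↔ G.Adj x.val y.val := by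
  simp only [Subgraph.coe_adj, Subgraph.deleteVerts_adj, Subgraph.top_adj, Subgraph.verts_top]
  exact ⟨fun h => h.2.2.2.2, fun h => ⟨trivial, x.prop.2, trivial, y.prop.2, h⟩⟩

/-- If every surviving vertex other than `r` has a surviving neighbour strictly closer
to `r`, then the graph obtained by deleting `D` is connected. -/
lemma connected_del {G : SimpleGraph V} (hconn : G.Connected) (r : V) (D : Set V)
    (hr : r ∉ D)
    (h : ∀ z, z ∉ D → z ≠ r → ∃ y, y ∉ D ∧ G.Adj z y ∧ G.dist r y < G.dist r z) :
    ((⊤ : G.Subgraph).deleteVerts D).coe.Connected := by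
  have hrmem : r ∈ ((⊤ : G.Subgraph).deleteVerts D).verts := ⟨trivial, hr⟩
  have key : ∀ n (z : ↥(((⊤ : G.Subgraph).deleteVerts D).verts)), G.dist r z.val = n →
      (((⊤ : G.Subgraph).deleteVerts D).coe).Reachable z ⟨r, hrmem⟩ := by
    intro n
    induction n using Nat.strong_induction_on with
    | _ n ih =>
      intro z hz
      by_cases hzr : z.val = r
      · have hz' : z = ⟨r, hrmem⟩ := Subtype.ext hzr
        rw [hz']
      · obtain ⟨y, hyD, hadj, hlt⟩ := h z.val z.prop.2 hzr
        have hymem : y ∈ ((⊤ : G.Subgraph).deleteVerts D).verts := ⟨trivial, hyD⟩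
        have hadj' : (((⊤ : G.Subgraph).deleteVerts D).coe).Adj z ⟨y, hymem⟩ :=
          (del_coe_adj z ⟨y, hymem⟩).mpr hadj
        exact hadj'.reachable.trans (ih (G.dist r y) (hz ▸ hlt) ⟨y, hymem⟩ rfl)
  rw [SimpleGraph.connected_iff]
  exact ⟨fun x y => (key _ x rfl).trans (key _ y rfl).symm, ⟨⟨r, hrmem⟩⟩⟩

/-- Lift a perfect matching of `G` minus two adjacent vertices to a perfect matching of `G`. -/
lemma lift_pm {G : SimpleGraph V} {a b : V} (hab : G.Adj a b)
    {M' : (((⊤ : G.Subgraph).deleteVerts {a, b}).coe).Subgraph}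
    (hM' : M'.IsPerfectMatching) : ∃ M : G.Subgraph, M.IsPerfectMatching := by
  refine ⟨Subgraph.coeSubgraph M' ⊔ G.subgraphOfAdj hab, ?_, ?_⟩
  · refine Subgraph.IsMatching.sup hM'.1.coeSubgraph
      (Subgraph.IsMatching.subgraphOfAdj hab) ?_
    rw [Set.disjoint_left]
    intro x hx1 hx2
    have h1 : x ∈ (Subgraph.coeSubgraph M').verts := Subgraph.support_subset_verts _ hx1
    have h2 : x ∈ (G.subgraphOfAdj hab).verts := Subgraph.support_subset_verts _ hx2
    rw [Subgraph.verts_coeSubgraph] at h1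
    obtain ⟨y, _, rfl⟩ := h1
    have : y.val ∈ ({a, b} : Set V) := by simpa using h2
    exact y.prop.2 this
  · intro x
    rw [Subgraph.verts_sup]
    by_cases hx : x ∈ ({a, b} : Set V)
    · right; simpa using hx
    · left
      rw [Subgraph.verts_coeSubgraph, hM'.2.verts_eq_univ]
      exact ⟨⟨x, ⟨trivial, hx⟩⟩, trivial, rfl⟩

/-- Sumner's theorem, by strong induction on the number of vertices. -/
lemma sumner : ∀ (n : ℕ), ∀ {V : Type u} [Fintype V] (G : SimpleGraph V),
    Fintype.card V = n → G.Connected →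
    (∀ u a b c : V, G.Adj u a → G.Adj u b → G.Adj u c → a ≠ b → a ≠ c → b ≠ c →
      ¬G.Adj a b → ¬G.Adj a c → ¬G.Adj b c → False) →
    Even n → ∃ M : G.Subgraph, M.IsPerfectMatching := by
  intro n
  induction n using Nat.strong_induction_on with
  | _ n ih =>
    intro V _ G hn hconn hcf heven
    classical
    obtain ⟨r⟩ := hconn.nonempty
    haveI : Nonempty V := ⟨r⟩
    have hnpos : 0 < n := hn ▸ Fintype.card_pos
    -- the common final step: delete two adjacent vertices whose removal leaves
    -- a connected graph, and apply the induction hypothesis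
    have finish : ∀ a b : V, G.Adj a b →
        ((⊤ : G.Subgraph).deleteVerts {a, b}).coe.Connected →
        ∃ M : G.Subgraph, M.IsPerfectMatching := by
      intro a b hab hconn'
      haveI : Fintype ↥(((⊤ : G.Subgraph).deleteVerts {a, b}).verts) := Fintype.ofFinite _
      have hcard : Fintype.card ↥(((⊤ : G.Subgraph).deleteVerts {a, b}).verts) = n - 2 := by
        rw [← Nat.card_eq_fintype_card, Nat.card_coe_set_eq,
          Subgraph.deleteVerts_verts, Subgraph.verts_top,
          Set.ncard_diff (Set.subset_univ _), Set.ncard_univ, Set.ncard_pair hab.ne,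
          Nat.card_eq_fintype_card, hn]
      have hcf' : ∀ u a' b' c' : ↥(((⊤ : G.Subgraph).deleteVerts {a, b}).verts),
          (((⊤ : G.Subgraph).deleteVerts {a, b}).coe).Adj u a' →
          (((⊤ : G.Subgraph).deleteVerts {a, b}).coe).Adj u b' →
          (((⊤ : G.Subgraph).deleteVerts {a, b}).coe).Adj u c' →
          a' ≠ b' → a' ≠ c' → b' ≠ c' →
          ¬(((⊤ : G.Subgraph).deleteVerts {a, b}).coe).Adj a' b' →
          ¬(((⊤ : G.Subgraph).deleteVerts {a, b}).coe).Adj a' c' →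
          ¬(((⊤ : G.Subgraph).deleteVerts {a, b}).coe).Adj b' c' → False := by
        intro u a' b' c' h1 h2 h3 h4 h5 h6 h7 h8 h9
        refine hcf u.val a'.val b'.val c'.val ((del_coe_adj _ _).mp h1)
          ((del_coe_adj _ _).mp h2) ((del_coe_adj _ _).mp h3)
          (fun h => h4 (Subtype.ext h)) (fun h => h5 (Subtype.ext h))
          (fun h => h6 (Subtype.ext h))
          (fun h => h7 ((del_coe_adj _ _).mpr h)) (fun h => h8 ((del_coe_adj _ _).mpr h))
          (fun h => h9 ((del_coe_adj _ _).mpr h))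
      obtain ⟨k, hk⟩ := heven
      obtain ⟨M', hM'⟩ := ih (n - 2) (by omega) _ hcard hconn' hcf' ⟨k - 1, by omega⟩
      exact lift_pm hab hM'
    -- set up the distance analysis
    set d := Finset.univ.sup (G.dist r) with hd
    obtain ⟨v, -, hv⟩ := Finset.exists_mem_eq_sup Finset.univ ⟨r, Finset.mem_univ r⟩ (G.dist r)
    have hdv : G.dist r v = d := hv.symm
    have hdle : ∀ z : V, G.dist r z ≤ d := fun z => Finset.le_sup (Finset.mem_univ z)
    have hd0 : d ≠ 0 := by
      intro h0
      have hall : ∀ z : V, z = r := by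
        intro z
        have : G.dist r z = 0 := le_antisymm (h0 ▸ hdle z) (Nat.zero_le _)
        exact (hconn.dist_eq_zero_iff.mp this).symm
      have : Fintype.card V = 1 := Fintype.card_eq_one_iff.mpr ⟨r, fun z => hall z ▸ rfl⟩
      rw [hn] at this
      obtain ⟨k, hk⟩ := heven
      omega
    by_cases hpair : ∃ a b : V, G.Adj a b ∧ G.dist r a = d ∧ G.dist r b = d
    · -- two adjacent vertices at maximum distance: delete them
      obtain ⟨a, b, hab, hda, hdb⟩ := hpair
      have hra : r ≠ a := fun h => hd0 (by rw [← hda, ← h, SimpleGraph.dist_self])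
      have hrb : r ≠ b := fun h => hd0 (by rw [← hdb, ← h, SimpleGraph.dist_self])
      refine finish a b hab (connected_del hconn r {a, b} (by simp [hra, hrb]) ?_)
      intro z hzD hzr
      have hz0 : G.dist r z ≠ 0 := fun h => hzr (hconn.dist_eq_zero_iff.mp h).symm
      obtain ⟨y, hadj, hy⟩ := exists_pred hconn hz0
      have hylt : G.dist r y < G.dist r z := by omega
      refine ⟨y, ?_, hadj, hylt⟩
      intro hyD
      have : G.dist r y = d := by
        rcases hyD with rfl | hyb
        · exact hda
        · rw [Set.mem_singleton_iff] at hyb; exact hyb ▸ hdb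
      have := hdle z
      omega
    · -- no two adjacent vertices at maximum distance
      push_neg at hpair
      have hv0 : G.dist r v ≠ 0 := hdv ▸ hd0
      obtain ⟨u, hvu, hu⟩ := exists_pred hconn hv0
      have hdu : G.dist r u + 1 = d := by rw [← hdv]; exact hu
      have hrv : v ≠ r := fun h => hv0 (h ▸ SimpleGraph.dist_self)
      by_cases hd1 : d = 1
      · -- the maximum distance is 1 : the graph must be a single edge
        have hur : u = r := by
          have : G.dist r u = 0 := by omega
          exact (hconn.dist_eq_zero_iff.mp this).symm
        subst hur
        have hadj1 : ∀ z : V, z ≠ u → G.Adj u z := by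
          intro z hz
          have h1 : G.dist u z ≠ 0 := fun h => hz (hconn.dist_eq_zero_iff.mp h).symm
          have h2 : G.dist u z ≤ 1 := hd1 ▸ hdle z
          exact SimpleGraph.dist_eq_one_iff_adj.mp (by omega)
        have hdist1 : ∀ z : V, z ≠ u → G.dist u z = d := by
          intro z hz
          have h1 : G.dist u z ≠ 0 := fun h => hz (hconn.dist_eq_zero_iff.mp h).symm
          have h2 : G.dist u z ≤ d := hdle z
          omega
        have hsub : ∀ z : V, z = u ∨ z = v := by
          by_contra hcon
          push_neg at hcon
          obtain ⟨z, hzu, hzv⟩ := hcon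
          by_cases hw : ∃ w : V, w ≠ u ∧ w ≠ v ∧ w ≠ z
          · obtain ⟨w, h1, h2, h3⟩ := hw
            exact hcf u v z w (hvu.symm) (hadj1 z hzu) (hadj1 w h1)
              (Ne.symm hzv) (Ne.symm h2) (Ne.symm h3)
              (fun h => hpair v z h hdv (hdist1 z hzu))
              (fun h => hpair v w h hdv (hdist1 w h1))
              (fun h => hpair z w h (hdist1 z hzu) (hdist1 w h1))
          · push_neg at hw
            have hsub3 : (Finset.univ : Finset V) ⊆ {u, v, z} := by
              intro w _
              simp only [Finset.mem_insert, Finset.mem_singleton]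
              by_cases h1 : w = u
              · exact Or.inl h1
              · by_cases h2 : w = v
                · exact Or.inr (Or.inl h2)
                · exact Or.inr (Or.inr (hw w h1 h2))
            have hle3 : n ≤ 3 := by
              calc n = (Finset.univ : Finset V).card := by rw [Finset.card_univ, hn]
              _ ≤ ({u, v, z} : Finset V).card := Finset.card_le_card hsub3
              _ ≤ 3 := by
                  refine (Finset.card_insert_le _ _).trans ?_
                  have := Finset.card_insert_le v ({z} : Finset V)
                  simp only [Finset.card_singleton] at this ⊢
                  omega
            have hge3 : 3 ≤ n := by
              have h3 : ({u, v, z} : Finset V).card = 3 := by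
                rw [Finset.card_insert_of_notMem (by simp [hvu.ne', Ne.symm hzu]),
                  Finset.card_insert_of_notMem (by simp [Ne.symm hzv]),
                  Finset.card_singleton]
              calc 3 = ({u, v, z} : Finset V).card := h3.symm
              _ ≤ (Finset.univ : Finset V).card := Finset.card_le_card (Finset.subset_univ _)
              _ = n := by rw [Finset.card_univ, hn]
            obtain ⟨k, hk⟩ := heven
            omega
        refine ⟨G.subgraphOfAdj hvu, Subgraph.IsMatching.subgraphOfAdj hvu, ?_⟩
        intro x
        rcases hsub x with rfl | rfl <;> simp
      · -- the maximum distance is at least 2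
        have hd2 : 2 ≤ d := by omega
        have hur : u ≠ r := by
          intro h
          rw [h, SimpleGraph.dist_self] at hdu
          omega
        obtain ⟨p, hup, hp⟩ := exists_pred hconn
          (show G.dist r u ≠ 0 from fun h => hur (hconn.dist_eq_zero_iff.mp h).symm)
        have hdp : G.dist r p + 2 = d := by omega
        -- key claim: no vertex at distance d other than v is adjacent to u
        have hkey : ∀ z : V, G.Adj u z → z ≠ v → G.dist r z = d → False := by
          intro z huz hzv hdz
          have hpv : p ≠ v := by
            intro h; rw [h, hdv] at hdp; omega
          have hpz : p ≠ z := by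
            intro h; rw [h, hdz] at hdp; omega
          have npv : ¬ G.Adj p v := by
            intro h
            have h1 : G.dist r v ≤ G.dist r p + G.dist p v := hconn.dist_triangle
            rw [SimpleGraph.dist_eq_one_iff_adj.mpr h, hdv] at h1
            omega
          have npz : ¬ G.Adj p z := by
            intro h
            have h1 : G.dist r z ≤ G.dist r p + G.dist p z := hconn.dist_triangle
            rw [SimpleGraph.dist_eq_one_iff_adj.mpr h, hdz] at h1
            omega
          exact hcf u p v z hup hvu.symm huz hpv hpz (Ne.symm hzv) npv npz
            (fun h => hpair v z h hdv hdz)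
        have hru : r ≠ u := Ne.symm hur
        refine finish v u hvu (connected_del hconn r {v, u} (by simp [Ne.symm hrv, hru]) ?_)
        intro z hzD hzr
        simp only [Set.mem_insert_iff, Set.mem_singleton_iff, not_or] at hzD
        obtain ⟨hzv, hzu⟩ := hzD
        have hz0 : G.dist r z ≠ 0 := fun h => hzr (hconn.dist_eq_zero_iff.mp h).symm
        obtain ⟨y, hadj, hy⟩ := exists_pred hconn hz0
        have hylt : G.dist r y < G.dist r z := by omega
        refine ⟨y, ?_, hadj, hylt⟩
        intro hyD
        rcases hyD with rfl | hyu
        · have := hdle z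
          rw [hdv] at hy
          omega
        · rw [Set.mem_singleton_iff] at hyu
          subst hyu
          have hdz : G.dist r z = d := by omega
          exact hkey z hadj.symm hzv hdz

end Stmt13Aux

/-- the deficiency of a graph has the same parity as its number of
vertices; in particular a connected claw-free graph on an even number of vertices
has a perfect matching. -/
theorem stmt_13 {V : Type*} [Fintype V] (G : SimpleGraph V) :
    deficiency G % 2 = Fintype.card V % 2 ∧
    (G.Connected →
      (∀ (u : V) (S : Set V), S ⊆ G.neighborSet u →
        S.Pairwise (fun a b => ¬ G.Adj a b) → S.ncard < 3) →
      Even (Fintype.card V) →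
      ∃ M : G.Subgraph, M.IsPerfectMatching) := by
  classical
  constructor
  · -- parity of the deficiency
    unfold deficiency
    set K := {n | ∃ M : G.Subgraph, M.IsMatching ∧ M.verts.ncard = n} with hK
    have h0 : 0 ∈ K := by
      refine ⟨⊥, fun v hv => absurd hv (by simp), by simp⟩
    have hbdd : ∀ m ∈ K, m ≤ Fintype.card V := by
      rintro m ⟨M, -, rfl⟩
      calc M.verts.ncard ≤ (Set.univ : Set V).ncard :=
        Set.ncard_le_ncard (Set.subset_univ _) (Set.toFinite _)
      _ = Fintype.card V := by rw [Set.ncard_univ, Nat.card_eq_fintype_card]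
    have hmem : sSup K ∈ K := Nat.sSup_mem ⟨0, h0⟩ ⟨Fintype.card V, hbdd⟩
    obtain ⟨M, hM, hMcard⟩ := hmem
    haveI : Fintype ↥M.verts := Fintype.ofFinite _
    have heven : Even (sSup K) := by
      rw [← hMcard, Set.ncard_eq_toFinset_card']
      exact hM.even_card
    have hle : sSup K ≤ Fintype.card V := hbdd _ ⟨M, hM, hMcard⟩
    obtain ⟨k, hk⟩ := heven
    rw [Nat.card_eq_fintype_card]
    omega
  · intro hconn hcf heven
    exact Stmt13Aux.sumner (Fintype.card V) G rfl hconn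
      (fun u a b c ha hb hc hab hac hbc nab nac nbc =>
        Stmt13Aux.no_claw hcf ha hb hc hab hac hbc nab nac nbc) heven
end
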